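/- arXiv:0807.2714 — 3 statements merged into one kernel-verified Lean document; each statement's English description precedes it below -/
import Mathlib

section
/- Fix integers n ≥ 2 and r−1 ≥ 1. For any λ ∈ ℤ^n and any 0 ≤ i ≤ n with s_i·λ ≠ λ, the (r−1)-quotient of s_i·λ equals λ^{quot}, or equals λ^{quot} + ϖ_j or λ^{quot} − ϖ_j for some 1 ≤ j ≤ n, where ϖ_j ∈ ℤ^n has first j entries equal to 1 and the rest equal to 0. Moreover for i = 0 the quotient is always unchanged: (s_0·λ)^{quot} = λ^{quot}. -/
open scoped Classical

namespace CCnDAHA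

variable {n : ℕ}




/-- σ(λ)_i = +1 if λ_i ≥ 0, −1 otherwise. -/
def sgn (lam : Fin n → ℤ) (i : Fin n) : ℤ := if 0 ≤ lam i then 1 else -1

/-- `Prec lam i j` : index `i` strictly precedes `j` in the ordering i_1,…,i_n. -/
def Prec (lam : Fin n → ℤ) (i j : Fin n) : Prop :=
  |lam j| < |lam i| ∨
    (|lam i| = |lam j| ∧
      ((0 ≤ lam i ∧ lam j < 0) ∨
       (0 ≤ lam i ∧ 0 ≤ lam j ∧ i < j) ∨
       (lam i < 0 ∧ lam j < 0 ∧ j < i)))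

/-- 0-based position of index `i` in the ordering i_1,…,i_n (position m−1). -/
noncomputable def posOf (lam : Fin n → ℤ) (i : Fin n) : ℕ :=
  (Finset.univ.filter (fun j => Prec lam j i)).card

/-- ρ(λ)_i = σ(λ)_i · (n − m) where i = i_m. -/
noncomputable def rho (lam : Fin n → ℤ) (i : Fin n) : ℤ :=
  sgn lam i * ((n : ℤ) - 1 - (posOf lam i : ℤ))

/-- (a,b)-neighborhood. -/
noncomputable def IsNbhd (a b : ℤ) (lam : Fin n → ℤ) (i j : Fin n) : Prop :=
  |rho lam i| - |rho lam j| = a - 1 ∧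
  |lam i| - |lam j| ≤ b ∧
  (|lam i| - |lam j| = b →
    ((0 ≤ lam i ∧ 0 ≤ lam j ∧ j < i) ∨
     (lam i < 0 ∧ lam j < 0 ∧ i < j) ∨
     (lam i < 0 ∧ 0 ≤ lam j)))

/-- (a,b)-admissible: no (a,b)-neighborhood. -/
noncomputable def Admissible (a b : ℤ) (lam : Fin n → ℤ) : Prop :=
  ∀ i j, ¬ IsNbhd a b lam i j

/-- number of (a,b)-neighborhoods. -/
noncomputable def nbhdCount (a b : ℤ) (lam : Fin n → ℤ) : ℕ :=
  ((Finset.univ : Finset (Fin n × Fin n)).filter (fun p => IsNbhd a b lam p.1 p.2)).card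

/-- dot action of the affine simple reflection s_i (0 ≤ i ≤ n, 1-based paper indexing). -/
noncomputable def dotAct (i : ℕ) (lam : Fin n → ℤ) : Fin n → ℤ := fun j =>
  if i = 0 then (if (j : ℕ) = 0 then -1 - lam j else lam j)
  else if i = n then (if (j : ℕ) + 1 = n then -lam j else lam j)
  else if h1 : (j : ℕ) + 1 = i ∧ i < n then lam ⟨(j : ℕ) + 1, by omega⟩
  else if h2 : (j : ℕ) = i then lam ⟨(j : ℕ) - 1, by have := j.isLt; omega⟩
  else lam j

/-- pairing ⟨λ, α_i⟩, for 0 ≤ i ≤ n. -/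
noncomputable def pairing (i : ℕ) (lam : Fin n → ℤ) : ℤ :=
  if hn : n = 0 then 0
  else if i = 0 then -2 * lam ⟨0, by omega⟩
  else if i = n then 2 * lam ⟨n - 1, by omega⟩
  else lam ⟨(i - 1) % n, Nat.mod_lt _ (by omega)⟩ - lam ⟨i % n, Nat.mod_lt _ (by omega)⟩

/-- partial sum λ_1 + ⋯ + λ_j. -/
def psum (lam : Fin n → ℤ) (j : Fin n) : ℤ :=
  ∑ i ∈ Finset.univ.filter (fun i => i ≤ j), lam i

/-- dominance order: μ ≤ λ. -/
def DomLE (mu lam : Fin n → ℤ) : Prop := ∀ j, psum mu j ≤ psum lam j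

/-- λ⁺ : the weakly decreasing rearrangement of (|λ_1|,…,|λ_n|). -/
noncomputable def lamPlus (lam : Fin n → ℤ) : Fin n → ℤ := fun j =>
  ((Multiset.sort (Multiset.map (fun i => |lam i|) Finset.univ.val) (· ≤ ·)).reverse).getD (j : ℕ) 0

/-- λ ≻ μ. -/
noncomputable def SuccOrd (lam mu : Fin n → ℤ) : Prop :=
  (DomLE (lamPlus mu) (lamPlus lam) ∧ lamPlus lam ≠ lamPlus mu) ∨
  (lamPlus lam = lamPlus mu ∧ DomLE mu lam ∧ lam ≠ mu)

/-- |λ_{i_m}|, with the sentinel value 0 at m = n+1. -/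
noncomputable def absAt (lam : Fin n → ℤ) (m : ℕ) : ℤ :=
  if m = n + 1 then 0
  else ∑ i ∈ Finset.univ.filter (fun i => posOf lam i + 1 = m), |lam i|

/-- σ(λ)_{i_m}, with sentinel value +1 at m = n+1. -/
noncomputable def sgAt (lam : Fin n → ℤ) (m : ℕ) : ℤ :=
  if m = n + 1 then 1
  else ∑ i ∈ Finset.univ.filter (fun i => posOf lam i + 1 = m), sgn lam i

/-- the (1-based) value of the index i_m, with sentinel value n+1 at m = n+1. -/
noncomputable def ixAt (lam : Fin n → ℤ) (m : ℕ) : ℕ :=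
  if m = n + 1 then n + 1
  else ∑ i ∈ Finset.univ.filter (fun i => posOf lam i + 1 = m), ((i : ℕ) + 1)

/-- β_m ∈ {0,1}. -/
noncomputable def betaAt (lam : Fin n → ℤ) (m : ℕ) : ℤ :=
  if (sgAt lam m = 1 ∧ sgAt lam (m + 1) = 1 ∧ ixAt lam (m + 1) < ixAt lam m) ∨
     (sgAt lam m = -1 ∧ sgAt lam (m + 1) = -1 ∧ ixAt lam m < ixAt lam (m + 1)) ∨
     (sgAt lam m = -1 ∧ sgAt lam (m + 1) = 1)
  then 1 else 0

/-- p_m = ⌊(|λ_{i_m}| − |λ_{i_{m+1}}| − β_m)/b⌋ (b plays the role of r−1). -/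
noncomputable def pAt (b : ℤ) (lam : Fin n → ℤ) (m : ℕ) : ℤ :=
  Int.fdiv (absAt lam m - absAt lam (m + 1) - betaAt lam m) b

/-- the b-quotient λ^{quot} (b plays the role of r−1): j-th entry is p_j + ⋯ + p_n
(1-based j = (j:Fin n) + 1). -/
noncomputable def quotOf (b : ℤ) (lam : Fin n → ℤ) : Fin n → ℤ := fun j =>
  ∑ m ∈ Finset.Icc ((j : ℕ) + 1) n, pAt b lam m

/-- fundamental weight ϖ_j (1-based j = (j : Fin n)+1): first j entries 1, rest 0. -/
def varpi (j : Fin n) : Fin n → ℤ := fun i => if i ≤ j then 1 else 0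



-- ### key theory
noncomputable def ckey (n : ℕ) (lam : Fin n → ℤ) (i : Fin n) : ℤ :=
  if 0 ≤ lam i then 2*(n:ℤ) - (i:ℕ) else ((i:ℕ):ℤ)

noncomputable def key (n : ℕ) (lam : Fin n → ℤ) (i : Fin n) : ℤ :=
  (2*(n:ℤ)+2) * |lam i| + ckey n lam i

lemma ckey_bounds (lam : Fin n → ℤ) (i : Fin n) :
    0 ≤ ckey n lam i ∧ ckey n lam i ≤ 2*(n:ℤ) ∧
    (0 ≤ lam i → (n:ℤ)+1 ≤ ckey n lam i) ∧ (lam i < 0 → ckey n lam i ≤ (n:ℤ)-1) := by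
  have hi := i.isLt
  unfold ckey
  split_ifs with h <;>
    refine ⟨by omega, by omega, fun h' => by omega, fun h' => by omega⟩

lemma ckey_inj (lam : Fin n → ℤ) {i j : Fin n} (h : ckey n lam i = ckey n lam j) : i = j := by
  have hi := i.isLt; have hj := j.isLt
  unfold ckey at h
  split_ifs at h <;> (apply Fin.ext; omega)

lemma keylt_iff {N a b ci cj : ℤ} (hci : 0 ≤ ci ∧ ci < N) (hcj : 0 ≤ cj ∧ cj < N) :
    N*b + cj < N*a + ci ↔ b < a ∨ (a = b ∧ cj < ci) := by
  constructor
  · intro h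
    rcases lt_trichotomy a b with h' | h' | h'
    · exfalso
      have : N*(a+1) ≤ N*b := mul_le_mul_of_nonneg_left (by omega) (by omega)
      nlinarith
    · right; exact ⟨h', by nlinarith⟩
    · left; exact h'
  · rintro (h | ⟨rfl, h⟩)
    · have : N*(b+1) ≤ N*a := mul_le_mul_of_nonneg_left (by omega) (by omega)
      nlinarith
    · omega

lemma key_lt_iff (lam : Fin n → ℤ) (i j : Fin n) :
    key n lam j < key n lam i ↔
      |lam j| < |lam i| ∨ (|lam i| = |lam j| ∧ ckey n lam j < ckey n lam i) := by
  have hci := ckey_bounds lam i; have hcj := ckey_bounds lam j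
  exact keylt_iff ⟨hci.1, by omega⟩ ⟨hcj.1, by omega⟩

lemma prec_iff (lam : Fin n → ℤ) (i j : Fin n) :
    Prec lam i j ↔ key n lam j < key n lam i := by
  rw [key_lt_iff]
  have hi := i.isLt; have hj := j.isLt
  unfold Prec ckey
  rw [Fin.lt_def, Fin.lt_def]
  rcases le_or_gt 0 (lam i) with h1 | h1 <;> rcases le_or_gt 0 (lam j) with h2 | h2
  · rw [if_pos h1, if_pos h2, abs_of_nonneg h1, abs_of_nonneg h2]; omega
  · rw [if_pos h1, if_neg (not_le.mpr h2), abs_of_nonneg h1, abs_of_neg h2]; omega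
  · rw [if_neg (not_le.mpr h1), if_pos h2, abs_of_neg h1, abs_of_nonneg h2]; omega
  · rw [if_neg (not_le.mpr h1), if_neg (not_le.mpr h2), abs_of_neg h1, abs_of_neg h2]; omega

lemma key_ne (lam : Fin n → ℤ) {i j : Fin n} (h : i ≠ j) : key n lam i ≠ key n lam j := by
  intro he
  have h1 : ¬(|lam j| < |lam i| ∨ (|lam i| = |lam j| ∧ ckey n lam j < ckey n lam i)) := by
    rw [← key_lt_iff]; omega
  have h2 : ¬(|lam i| < |lam j| ∨ (|lam j| = |lam i| ∧ ckey n lam i < ckey n lam j)) := by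
    rw [← key_lt_iff]; omega
  exact h (ckey_inj lam (by omega))

noncomputable def rk (n : ℕ) (lam : Fin n → ℤ) (i : Fin n) : ℕ :=
  (Finset.univ.filter (fun j => key n lam i < key n lam j)).card

lemma posOf_eq_rk (lam : Fin n → ℤ) (i : Fin n) : posOf lam i = rk n lam i := by
  unfold posOf rk
  congr 1
  apply Finset.filter_congr
  intro j _
  rw [prec_iff]

lemma rk_lt (lam : Fin n → ℤ) (i : Fin n) : rk n lam i < n := by
  have h : (Finset.univ.filter (fun j => key n lam i < key n lam j)) ⊆ Finset.univ.erase i := by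
    intro j hj
    rw [Finset.mem_filter] at hj
    rw [Finset.mem_erase]
    exact ⟨fun he => by simp [he] at hj, Finset.mem_univ _⟩
  have := Finset.card_le_card h
  rw [Finset.card_erase_of_mem (Finset.mem_univ i), Finset.card_univ, Fintype.card_fin] at this
  have hn : 0 < n := i.pos
  unfold rk; omega

lemma rk_lt_of_key_lt (lam : Fin n → ℤ) {i j : Fin n} (h : key n lam i < key n lam j) :
    rk n lam j < rk n lam i := by
  apply Finset.card_lt_card
  rw [Finset.ssubset_iff_of_subset]
  · exact ⟨j, by simp [h], by simp⟩
  · intro k hk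
    rw [Finset.mem_filter] at hk ⊢
    exact ⟨hk.1, h.trans hk.2⟩

lemma rk_inj (lam : Fin n → ℤ) {i j : Fin n} (h : rk n lam i = rk n lam j) : i = j := by
  by_contra hne
  rcases lt_trichotomy (key n lam i) (key n lam j) with h' | h' | h'
  · exact absurd h (by have := rk_lt_of_key_lt lam h'; omega)
  · exact key_ne lam hne h'
  · exact absurd h (by have := rk_lt_of_key_lt lam h'; omega)

noncomputable def rkE (n : ℕ) (lam : Fin n → ℤ) : Fin n ≃ Fin n :=
  Equiv.ofBijective (fun i => ⟨rk n lam i, rk_lt lam i⟩)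
    (Finite.injective_iff_bijective.mp (fun i j h => rk_inj lam (by simpa [Fin.ext_iff] using h)))

noncomputable def idx (n : ℕ) (lam : Fin n → ℤ) (m : Fin n) : Fin n := (rkE n lam).symm m

lemma rk_idx (lam : Fin n → ℤ) (m : Fin n) : rk n lam (idx n lam m) = (m : ℕ) := by
  have := (rkE n lam).apply_symm_apply m
  unfold idx
  rw [show rk n lam ((rkE n lam).symm m) = ((rkE n lam) ((rkE n lam).symm m) : Fin n) from rfl, this]

lemma idx_of_rk (lam : Fin n → ℤ) (i : Fin n) (m : Fin n) (h : rk n lam i = (m : ℕ)) :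
    idx n lam m = i := by
  apply rk_inj lam
  rw [rk_idx, h]

-- ### the sorted key sequence
noncomputable def KK (n : ℕ) (lam : Fin n → ℤ) (m : ℕ) : ℤ :=
  if h : m - 1 < n then key n lam (idx n lam ⟨m-1, h⟩) else (n:ℤ)

noncomputable def CC (n : ℕ) (lam : Fin n → ℤ) (m : ℕ) : ℤ :=
  if h : m - 1 < n then ckey n lam (idx n lam ⟨m-1, h⟩) else (n:ℤ)

noncomputable def AA (n : ℕ) (lam : Fin n → ℤ) (m : ℕ) : ℤ :=
  if h : m - 1 < n then |lam (idx n lam ⟨m-1, h⟩)| else 0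

lemma KK_decomp (lam : Fin n → ℤ) (m : ℕ) :
    KK n lam m = (2*(n:ℤ)+2) * AA n lam m + CC n lam m := by
  unfold KK CC AA key
  split_ifs <;> simp

lemma filter_posOf_eq (lam : Fin n → ℤ) {m : ℕ} (h1 : 1 ≤ m) (h2 : m ≤ n) :
    Finset.univ.filter (fun i => posOf lam i + 1 = m) = {idx n lam ⟨m-1, by omega⟩} := by
  ext i
  simp only [Finset.mem_filter, Finset.mem_univ, true_and, Finset.mem_singleton]
  constructor
  · intro h
    exact (idx_of_rk lam i ⟨m-1, by omega⟩ (by rw [← posOf_eq_rk]; simp; omega)).symm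
  · intro h
    subst h
    rw [posOf_eq_rk, rk_idx]
    simp; omega

lemma absAt_eq (lam : Fin n → ℤ) {m : ℕ} (h1 : 1 ≤ m) (h2 : m ≤ n) :
    absAt lam m = |lam (idx n lam ⟨m-1, by omega⟩)| := by
  unfold absAt
  rw [if_neg (by omega), filter_posOf_eq lam h1 h2, Finset.sum_singleton]

lemma sgAt_eq (lam : Fin n → ℤ) {m : ℕ} (h1 : 1 ≤ m) (h2 : m ≤ n) :
    sgAt lam m = sgn lam (idx n lam ⟨m-1, by omega⟩) := by
  unfold sgAt
  rw [if_neg (by omega), filter_posOf_eq lam h1 h2, Finset.sum_singleton]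

lemma ixAt_eq (lam : Fin n → ℤ) {m : ℕ} (h1 : 1 ≤ m) (h2 : m ≤ n) :
    ixAt lam m = (idx n lam ⟨m-1, by omega⟩ : ℕ) + 1 := by
  unfold ixAt
  rw [if_neg (by omega), filter_posOf_eq lam h1 h2, Finset.sum_singleton]

lemma CC_bounds (lam : Fin n → ℤ) {m : ℕ} (h1 : 1 ≤ m) (h2 : m ≤ n+1) :
    0 ≤ CC n lam m ∧ CC n lam m ≤ 2*(n:ℤ) ∧ KK n lam m = (2*(n:ℤ)+2) * AA n lam m + CC n lam m := by
  refine ⟨?_, ?_, KK_decomp lam m⟩ <;>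
  · unfold CC
    split_ifs with h
    · have := ckey_bounds lam (idx n lam ⟨m-1, h⟩); omega
    · omega

/-- full description of CC at a position -/
lemma CC_cases (lam : Fin n → ℤ) {m : ℕ} (h1 : 1 ≤ m) (h2 : m ≤ n+1) :
    (m = n+1 ∧ CC n lam m = (n:ℤ)) ∨
    (m ≤ n ∧ ∃ h : m - 1 < n,
      (0 ≤ lam (idx n lam ⟨m-1, h⟩) ∧ CC n lam m = 2*(n:ℤ) - (idx n lam ⟨m-1, h⟩ : ℕ)) ∨
      (lam (idx n lam ⟨m-1, h⟩) < 0 ∧ CC n lam m = ((idx n lam ⟨m-1, h⟩ : ℕ) : ℤ))) := by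
  rcases Nat.lt_or_ge m (n+1) with h | h
  · right
    refine ⟨by omega, by omega, ?_⟩
    unfold CC
    rw [dif_pos]
    unfold ckey
    split_ifs with h' <;> [left; right] <;> exact ⟨by omega, rfl⟩
  · left
    have : m = n+1 := by omega
    subst this
    exact ⟨rfl, by unfold CC; rw [dif_neg (by omega)]⟩

lemma CC_inj (lam : Fin n → ℤ) {m m' : ℕ} (h1 : 1 ≤ m) (h2 : m ≤ n+1) (h1' : 1 ≤ m')
    (h2' : m' ≤ n+1) (hne : m ≠ m') : CC n lam m ≠ CC n lam m' := by
  intro he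
  rcases CC_cases lam h1 h2 with ⟨hm, hv⟩ | ⟨hm, hlt, hv⟩ <;>
    rcases CC_cases lam h1' h2' with ⟨hm', hv'⟩ | ⟨hm', hlt', hv'⟩
  · omega
  · rcases hv' with ⟨hs, hv'⟩ | ⟨hs, hv'⟩ <;>
      [have := (idx n lam ⟨m'-1, hlt'⟩).isLt; have := (idx n lam ⟨m'-1, hlt'⟩).isLt] <;> omega
  · rcases hv with ⟨hs, hv⟩ | ⟨hs, hv⟩ <;>
      [have := (idx n lam ⟨m-1, hlt⟩).isLt; have := (idx n lam ⟨m-1, hlt⟩).isLt] <;> omega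
  · have hii : idx n lam ⟨m-1, hlt⟩ = idx n lam ⟨m'-1, hlt'⟩ := by
      apply ckey_inj lam
      unfold CC at he
      rw [dif_pos hlt, dif_pos hlt'] at he
      exact he
    have := congrArg (fun i => rk n lam i) hii
    simp only [rk_idx] at this
    omega

-- ### integer division toolkit
lemma ediv_eq_of_bounds {M x q : ℤ} (hM : 0 < M) (h1 : M * q ≤ x) (h2 : x < M * (q+1)) :
    x / M = q := by
  have hexp : M * (q+1) = M*q + M := by ring
  have h := (Int.ediv_emod_unique (a := x) (b := M) (r := x - M*q) (q := q) hM).mpr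
    ⟨by ring, by omega, by omega⟩
  exact h.1

lemma ediv_self_interval {M x : ℤ} (hM : 0 < M) : M * (x / M) ≤ x ∧ x < M * (x / M + 1) := by
  have hexp : M * (x/M+1) = M*(x/M) + M := by ring
  have h1 := Int.mul_ediv_add_emod x M
  have h2 := Int.emod_nonneg x (by omega : M ≠ 0)
  have h3 := Int.emod_lt_of_pos x hM
  constructor <;> omega

lemma ediv_add_one_eq {M x : ℤ} (hM : 0 < M) (h : ¬ M ∣ x + 1) : (x + 1) / M = x / M := by
  obtain ⟨h1, h2⟩ := ediv_self_interval (x := x) hM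
  apply ediv_eq_of_bounds hM (by omega)
  rcases lt_or_eq_of_le (by omega : x + 1 ≤ M * (x / M + 1)) with h' | h'
  · exact h'
  · exact absurd ⟨x / M + 1, by linarith⟩ h

lemma ediv_sub_one_eq {M x : ℤ} (hM : 0 < M) (h : ¬ M ∣ x) : (x - 1) / M = x / M := by
  have := ediv_add_one_eq hM (x := x - 1) (by simpa using h)
  simpa using this.symm

/-- shift by s ∈ [-2,2] with no multiple crossed -/
lemma ediv_shift_eq {M x s : ℤ} (hM : 0 < M) (hs : -2 ≤ s ∧ s ≤ 2)
    (h : ∀ j : ℤ, (0 < j ∧ j ≤ s) ∨ (s < j ∧ j ≤ 0) → ¬ M ∣ x + j) : (x + s) / M = x / M := by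
  obtain ⟨hs1, hs2⟩ := hs
  interval_cases s
  · rw [show x + -2 = (x + -1) - 1 by ring, ediv_sub_one_eq hM (by simpa using h (-1) (by omega)),
      show x + -1 = x - 1 by ring, ediv_sub_one_eq hM (by simpa using h 0 (by omega))]
  · rw [show x + -1 = x - 1 by ring, ediv_sub_one_eq hM (by simpa using h 0 (by omega))]
  · simp
  · exact ediv_add_one_eq hM (h 1 (by omega))
  · rw [show x + 2 = (x + 1) + 1 by ring, ediv_add_one_eq hM (by have := h 2 (by omega); rwa [show x+2 = x+1+1 by ring] at this),
      ediv_add_one_eq hM (h 1 (by omega))]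

lemma ediv_shift_bound {M x s : ℤ} (hM : 2 ≤ M) (hs1 : -2 ≤ s) (hs2 : s ≤ 2) :
    (x + s) / M - x / M = 0 ∨ (x + s) / M - x / M = 1 ∨ (x + s) / M - x / M = -1 := by
  have hM' : M ≠ 0 := by omega
  have h1 : (x + (-1) * M) / M = x / M + (-1) := Int.add_mul_ediv_right x (-1) hM'
  have h2 : (x + 1 * M) / M = x / M + 1 := Int.add_mul_ediv_right x 1 hM'
  have l1 : (x + (-1) * M) / M ≤ (x + s) / M := Int.ediv_le_ediv (by omega) (by omega)
  have l2 : (x + s) / M ≤ (x + 1 * M) / M := Int.ediv_le_ediv (by omega) (by omega)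
  omega


lemma ediv_ediv {a N b : ℤ} (hN : 0 < N) (hb : 0 < b) : a / N / b = a / (N * b) := by
  symm
  obtain ⟨g1, g2⟩ := ediv_self_interval (x := a) hN
  obtain ⟨f1, f2⟩ := ediv_self_interval (x := a / N) hb
  refine ediv_eq_of_bounds (by positivity) ?_ ?_
  · calc N * b * (a / N / b) = N * (b * (a / N / b)) := by ring
        _ ≤ N * (a / N) := mul_le_mul_of_nonneg_left f1 (by omega)
        _ ≤ a := g1
  · have : a / N + 1 ≤ b * (a / N / b + 1) := by omega
    calc a < N * (a / N + 1) := g2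
      _ ≤ N * (b * (a / N / b + 1)) := mul_le_mul_of_nonneg_left this (by omega)
      _ = N * b * (a / N / b + 1) := by ring

lemma dvd_resolve (hn : 2 ≤ n) (lam : Fin n → ℤ) {m m' : ℕ} {e : ℤ}
    (hm : 1 ≤ m ∧ m ≤ n+1) (hm' : 1 ≤ m' ∧ m' ≤ n+1) (he : -2 ≤ e ∧ e ≤ 2)
    (h : (2*(n:ℤ)+2) ∣ (KK n lam m - KK n lam m' + e)) :
    CC n lam m - CC n lam m' + e = 0 := by
  obtain ⟨c1, c2, c3⟩ := CC_bounds lam hm.1 hm.2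
  obtain ⟨c1', c2', c3'⟩ := CC_bounds lam hm'.1 hm'.2
  have hdvd : (2*(n:ℤ)+2) ∣ (CC n lam m - CC n lam m' + e) := by
    have h2 : KK n lam m - KK n lam m' + e
        = (2*(n:ℤ)+2) * (AA n lam m - AA n lam m') + (CC n lam m - CC n lam m' + e) := by
      rw [c3, c3']; ring
    rw [h2] at h
    exact (dvd_add_right ⟨_, rfl⟩).mp h
  obtain ⟨k, hk⟩ := hdvd
  have hk1 : -1 ≤ k := by nlinarith
  have hk2 : k ≤ 1 := by nlinarith
  interval_cases k
  -- k = -1 : CC m = 0 is impossible together with CC m' = 2n unless slot-0 sign clash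
  · exfalso
    have hcm : CC n lam m = 0 ∧ CC n lam m' = 2*(n:ℤ) ∧ e = -2 := by omega
    rcases CC_cases lam hm.1 hm.2 with ⟨_, hv⟩ | ⟨_, hlt, (⟨hs, hv⟩ | ⟨hs, hv⟩)⟩ <;>
      rcases CC_cases lam hm'.1 hm'.2 with ⟨_, hv'⟩ | ⟨_, hlt', (⟨hs', hv'⟩ | ⟨hs', hv'⟩)⟩ <;>
      [skip; skip; skip; skip; skip; skip; skip; skip; skip] <;>
      first
      | omega
      | (exfalso
         have hi := (idx n lam ⟨m-1, by omega⟩).isLt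
         have hi' := (idx n lam ⟨m'-1, by omega⟩).isLt
         first
         | omega
         | (have e1 : (idx n lam ⟨m-1, by omega⟩ : ℕ) = 0 := by omega
            have e2 : (idx n lam ⟨m'-1, by omega⟩ : ℕ) = 0 := by omega
            have : idx n lam ⟨m-1, by omega⟩ = idx n lam ⟨m'-1, by omega⟩ := Fin.ext (by omega)
            rw [this] at hs
            omega))
  · omega
  · exfalso
    have hcm : CC n lam m = 2*(n:ℤ) ∧ CC n lam m' = 0 ∧ e = 2 := by omega
    rcases CC_cases lam hm.1 hm.2 with ⟨_, hv⟩ | ⟨_, hlt, (⟨hs, hv⟩ | ⟨hs, hv⟩)⟩ <;>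
      rcases CC_cases lam hm'.1 hm'.2 with ⟨_, hv'⟩ | ⟨_, hlt', (⟨hs', hv'⟩ | ⟨hs', hv'⟩)⟩ <;>
      first
      | omega
      | (exfalso
         have hi := (idx n lam ⟨m-1, by omega⟩).isLt
         have hi' := (idx n lam ⟨m'-1, by omega⟩).isLt
         first
         | omega
         | (have e1 : (idx n lam ⟨m-1, by omega⟩ : ℕ) = 0 := by omega
            have e2 : (idx n lam ⟨m'-1, by omega⟩ : ℕ) = 0 := by omega
            have : idx n lam ⟨m-1, by omega⟩ = idx n lam ⟨m'-1, by omega⟩ := Fin.ext (by omega)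
            rw [this] at hs
            omega))

lemma sgn_pos {lam : Fin n → ℤ} {i : Fin n} (h : 0 ≤ lam i) : sgn lam i = 1 := if_pos h
lemma sgn_neg {lam : Fin n → ℤ} {i : Fin n} (h : lam i < 0) : sgn lam i = -1 :=
  if_neg (not_le.mpr h)

lemma CC_eq_ckey (lam : Fin n → ℤ) {m : ℕ} (h1 : 1 ≤ m) (h2 : m ≤ n) :
    CC n lam m = ckey n lam (idx n lam ⟨m-1, by omega⟩) := by
  unfold CC; rw [dif_pos (by omega)]

lemma CC_sentinel (lam : Fin n → ℤ) : CC n lam (n+1) = (n:ℤ) := by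
  unfold CC; rw [dif_neg (by omega)]

lemma KK_eq_key (lam : Fin n → ℤ) {m : ℕ} (h1 : 1 ≤ m) (h2 : m ≤ n) :
    KK n lam m = key n lam (idx n lam ⟨m-1, by omega⟩) := by
  unfold KK; rw [dif_pos (by omega)]

lemma KK_sentinel (lam : Fin n → ℤ) : KK n lam (n+1) = (n:ℤ) := by
  unfold KK; rw [dif_neg (by omega)]

lemma idx_ne (lam : Fin n → ℤ) {p q : Fin n} (h : p ≠ q) : idx n lam p ≠ idx n lam q := by
  intro he
  exact h (by
    have := congrArg (rk n lam) he
    simp only [rk_idx] at this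
    exact Fin.ext this)

lemma sgAt_eq' (lam : Fin n → ℤ) {m : ℕ} {i : Fin n} (h1 : 1 ≤ m) (h2 : m ≤ n)
    (hi : rk n lam i = m - 1) : sgAt lam m = sgn lam i := by
  rw [sgAt_eq lam h1 h2, idx_of_rk lam i ⟨m-1, by omega⟩ (by simp [hi])]

lemma ixAt_eq' (lam : Fin n → ℤ) {m : ℕ} {i : Fin n} (h1 : 1 ≤ m) (h2 : m ≤ n)
    (hi : rk n lam i = m - 1) : ixAt lam m = (i:ℕ) + 1 := by
  rw [ixAt_eq lam h1 h2, idx_of_rk lam i ⟨m-1, by omega⟩ (by simp [hi])]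

lemma CC_eq_ckey' (lam : Fin n → ℤ) {m : ℕ} {i : Fin n} (h1 : 1 ≤ m) (h2 : m ≤ n)
    (hi : rk n lam i = m - 1) : CC n lam m = ckey n lam i := by
  rw [CC_eq_ckey lam h1 h2, idx_of_rk lam i ⟨m-1, by omega⟩ (by simp [hi])]

lemma KK_eq_key' (lam : Fin n → ℤ) {m : ℕ} {i : Fin n} (h1 : 1 ≤ m) (h2 : m ≤ n)
    (hi : rk n lam i = m - 1) : KK n lam m = key n lam i := by
  rw [KK_eq_key lam h1 h2, idx_of_rk lam i ⟨m-1, by omega⟩ (by simp [hi])]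

lemma AA_eq_abs' (lam : Fin n → ℤ) {m : ℕ} {i : Fin n} (h1 : 1 ≤ m) (h2 : m ≤ n)
    (hi : rk n lam i = m - 1) : AA n lam m = |lam i| := by
  unfold AA
  rw [dif_pos (by omega : m - 1 < n), idx_of_rk lam i ⟨m-1, by omega⟩ (by simp [hi])]

lemma ckey_pos {lam : Fin n → ℤ} {i : Fin n} (h : 0 ≤ lam i) :
    ckey n lam i = 2*(n:ℤ) - (i:ℕ) := by unfold ckey; rw [if_pos h]

lemma ckey_negv {lam : Fin n → ℤ} {i : Fin n} (h : lam i < 0) :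
    ckey n lam i = ((i:ℕ):ℤ) := by unfold ckey; rw [if_neg (not_le.mpr h)]

lemma betaAt_eq (lam : Fin n → ℤ) {m : ℕ} (h1 : 1 ≤ m) (h2 : m ≤ n) :
    betaAt lam m = if CC n lam m < CC n lam (m+1) then 1 else 0 := by
  obtain ⟨i, hi⟩ : ∃ i, rk n lam i = m - 1 := ⟨idx n lam ⟨m-1, by omega⟩, by simp [rk_idx]⟩
  have hiv := i.isLt
  rcases Nat.lt_or_ge m n with hm | hm
  · obtain ⟨j, hj⟩ : ∃ j, rk n lam j = m + 1 - 1 :=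
      ⟨idx n lam ⟨m, by omega⟩, by simp [rk_idx]⟩
    have hijv : (i:ℕ) ≠ (j:ℕ) := fun h => by
      have : i = j := Fin.ext h
      subst this; omega
    have hjv := j.isLt
    unfold betaAt
    rw [sgAt_eq' lam h1 h2 hi, sgAt_eq' lam (by omega) (by omega) hj,
      ixAt_eq' lam h1 h2 hi, ixAt_eq' lam (by omega) (by omega) hj,
      CC_eq_ckey' lam h1 h2 hi, CC_eq_ckey' lam (by omega) (by omega) hj]
    rcases le_or_gt 0 (lam i) with hsi | hsi <;> rcases le_or_gt 0 (lam j) with hsj | hsj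
    · rw [sgn_pos hsi, sgn_pos hsj, ckey_pos hsi, ckey_pos hsj]
      by_cases hji : (j:ℕ) + 1 < (i:ℕ) + 1
      · rw [if_pos (Or.inl ⟨rfl, rfl, hji⟩), if_pos (by omega)]
      · rw [if_neg (by rintro (⟨_, _, h⟩ | ⟨h, _, _⟩ | ⟨h, _⟩) <;> omega), if_neg (by omega)]
    · rw [sgn_pos hsi, sgn_neg hsj, ckey_pos hsi, ckey_negv hsj,
        if_neg (by rintro (⟨_, h, _⟩ | ⟨h, _, _⟩ | ⟨h, _⟩) <;> omega), if_neg (by omega)]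
    · rw [sgn_neg hsi, sgn_pos hsj, ckey_negv hsi, ckey_pos hsj,
        if_pos (Or.inr (Or.inr ⟨rfl, rfl⟩)), if_pos (by omega)]
    · rw [sgn_neg hsi, sgn_neg hsj, ckey_negv hsi, ckey_negv hsj]
      by_cases hij : (i:ℕ) + 1 < (j:ℕ) + 1
      · rw [if_pos (Or.inr (Or.inl ⟨rfl, rfl, hij⟩)), if_pos (by omega)]
      · rw [if_neg (by rintro (⟨h, _, _⟩ | ⟨_, _, h⟩ | ⟨_, h⟩) <;> omega), if_neg (by omega)]
  · have hmn : m = n := by omega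
    subst hmn
    have hsg : sgAt lam (m+1) = 1 := by unfold sgAt; rw [if_pos rfl]
    have hix : ixAt lam (m+1) = m+1 := by unfold ixAt; rw [if_pos rfl]
    unfold betaAt
    rw [sgAt_eq' lam h1 h2 hi, ixAt_eq' lam h1 h2 hi, hsg, hix,
      CC_eq_ckey' lam h1 h2 hi, CC_sentinel lam]
    rcases le_or_gt 0 (lam i) with hsi | hsi
    · rw [sgn_pos hsi, ckey_pos hsi,
        if_neg (by rintro (⟨_, _, h⟩ | ⟨h, _, _⟩ | ⟨h, _⟩) <;> omega), if_neg (by omega)]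
    · rw [sgn_neg hsi, ckey_negv hsi,
        if_pos (Or.inr (Or.inr ⟨rfl, rfl⟩)), if_pos (by omega)]
lemma absAt_eq_AA (lam : Fin n → ℤ) {m : ℕ} (h1 : 1 ≤ m) (h2 : m ≤ n+1) :
    absAt lam m = AA n lam m := by
  rcases Nat.lt_or_ge m (n+1) with hm | hm
  · rw [absAt_eq lam h1 (by omega)]
    unfold AA; rw [dif_pos (by omega)]
  · have : m = n+1 := by omega
    subst this
    unfold absAt AA
    rw [if_pos rfl, dif_neg (by omega)]

lemma pAt_eq (hn : 2 ≤ n) {b : ℤ} (hb : 1 ≤ b) (lam : Fin n → ℤ) {m : ℕ}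
    (h1 : 1 ≤ m) (h2 : m ≤ n) :
    pAt b lam m = (KK n lam m - KK n lam (m+1) - 1) / ((2*(n:ℤ)+2) * b) := by
  have hN : (0:ℤ) < 2*(n:ℤ)+2 := by positivity
  obtain ⟨c1, c2, c3⟩ := CC_bounds lam h1 (by omega)
  obtain ⟨c1', c2', c3'⟩ := CC_bounds lam (m := m+1) (by omega) (by omega)
  have hCCne : CC n lam m ≠ CC n lam (m+1) :=
    CC_inj lam h1 (by omega) (by omega) (by omega) (by omega)
  have hexp : KK n lam m - KK n lam (m+1) - 1
      = (CC n lam m - CC n lam (m+1) - 1) + (2*(n:ℤ)+2) * (AA n lam m - AA n lam (m+1)) := by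
    rw [c3, c3']; ring
  rw [hexp, ← ediv_ediv hN (by omega : (0:ℤ) < b),
    Int.add_mul_ediv_left _ _ (by omega : (2*(n:ℤ)+2) ≠ 0)]
  have hsml : (CC n lam m - CC n lam (m+1) - 1) / (2*(n:ℤ)+2)
      = if CC n lam m < CC n lam (m+1) then -1 else 0 := by
    split_ifs with h
    · exact ediv_eq_of_bounds hN (by omega) (by omega)
    · exact ediv_eq_of_bounds hN (by omega) (by omega)
  rw [hsml]
  unfold pAt
  rw [absAt_eq_AA lam h1 (by omega), absAt_eq_AA lam (by omega : 1 ≤ m+1) (by omega),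
    betaAt_eq lam h1 h2, Int.fdiv_eq_ediv_of_nonneg _ (by omega : (0:ℤ) ≤ b)]
  split_ifs with h <;> ring_nf

lemma quotOf_eq (hn : 2 ≤ n) {b : ℤ} (hb : 1 ≤ b) (lam : Fin n → ℤ) (k : Fin n) :
    quotOf b lam k
      = ∑ m ∈ Finset.Icc ((k:ℕ)+1) n, (KK n lam m - KK n lam (m+1) - 1) / ((2*(n:ℤ)+2) * b) := by
  unfold quotOf
  refine Finset.sum_congr rfl (fun m hm => ?_)
  rw [Finset.mem_Icc] at hm
  exact pAt_eq hn hb lam (by omega) (by omega)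

-- ### transporting ranks along a perturbation
lemma rank_transport (lam lam' : Fin n → ℤ) (σ : Equiv.Perm (Fin n))
    (hmono : ∀ a b : Fin n, key n lam (σ a) < key n lam (σ b) → key n lam' a < key n lam' b) :
    ∀ j, rk n lam' j = rk n lam (σ j) := by
  have hiff : ∀ a b, key n lam' a < key n lam' b ↔ key n lam (σ a) < key n lam (σ b) := by
    intro a b
    constructor
    · intro h
      rcases lt_trichotomy (key n lam (σ a)) (key n lam (σ b)) with h' | h' | h'
      · exact h'
      · exfalso
        have hab : σ a = σ b := by
          by_contra hne
          exact key_ne lam hne h'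
        have : a = b := σ.injective hab
        subst this
        omega
      · exact absurd (hmono _ _ h') (by omega)
    · exact hmono a b
  intro j
  unfold rk
  have h1 : (Finset.univ.filter (fun k => key n lam' j < key n lam' k)).card
      = (Finset.univ.filter (fun k => key n lam (σ j) < key n lam (σ k))).card := by
    congr 1
    apply Finset.filter_congr
    intro k _
    rw [hiff]
  rw [h1]
  refine Finset.card_bij (fun k _ => σ k) ?_ ?_ ?_
  · intro k hk
    rw [Finset.mem_filter] at hk ⊢
    exact ⟨Finset.mem_univ _, hk.2⟩
  · intro a _ b _ h
    exact σ.injective h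
  · intro c hc
    rw [Finset.mem_filter] at hc
    refine ⟨σ.symm c, ?_, by simp⟩
    rw [Finset.mem_filter]
    refine ⟨Finset.mem_univ _, ?_⟩
    rw [σ.apply_symm_apply]
    exact hc.2

lemma idx_transport (lam lam' : Fin n → ℤ) (σ : Equiv.Perm (Fin n))
    (hrk : ∀ j, rk n lam' j = rk n lam (σ j)) (m : Fin n) :
    idx n lam' m = σ.symm (idx n lam m) := by
  apply idx_of_rk lam' _ m
  rw [hrk, σ.apply_symm_apply, rk_idx]

lemma KK_transport (lam lam' : Fin n → ℤ) (σ : Equiv.Perm (Fin n)) (ε : Fin n → ℤ)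
    (hkey : ∀ a, key n lam' a = key n lam (σ a) + ε (σ a))
    (hrk : ∀ j, rk n lam' j = rk n lam (σ j)) {m : ℕ} (h1 : 1 ≤ m) (h2 : m ≤ n+1) :
    KK n lam' m = KK n lam m
      + (if h : m - 1 < n then ε (idx n lam ⟨m-1, h⟩) else 0) := by
  rcases Nat.lt_or_ge m (n+1) with hm | hm
  · rw [KK_eq_key lam' h1 (by omega), KK_eq_key lam h1 (by omega),
      idx_transport lam lam' σ hrk, hkey, σ.apply_symm_apply, dif_pos (by omega : m - 1 < n)]
  · have : m = n+1 := by omega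
    subst this
    rw [KK_sentinel, KK_sentinel, dif_neg (by omega)]
    ring

-- ### concluding the statement from coordinatewise control of pAt
lemma quot_eq_of_pAt {b : ℤ} (lam lam' : Fin n → ℤ)
    (h : ∀ m, 1 ≤ m → m ≤ n → pAt b lam' m = pAt b lam m) :
    quotOf b lam' = quotOf b lam := by
  funext k
  unfold quotOf
  refine Finset.sum_congr rfl (fun m hm => ?_)
  rw [Finset.mem_Icc] at hm
  exact h m (by omega) (by omega)

lemma quot_shift {b : ℤ} (lam lam' : Fin n → ℤ) (ms : ℕ) (hms : 1 ≤ ms ∧ ms ≤ n)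
    (hp : ∀ m, 1 ≤ m → m ≤ n → m ≠ ms → pAt b lam' m = pAt b lam m)
    (hd : pAt b lam' ms - pAt b lam ms = 0 ∨ pAt b lam' ms - pAt b lam ms = 1 ∨
      pAt b lam' ms - pAt b lam ms = -1) :
    quotOf b lam' = quotOf b lam ∨
      ∃ j : Fin n, quotOf b lam' = quotOf b lam + varpi j ∨
        quotOf b lam' = quotOf b lam - varpi j := by
  set d : ℤ := pAt b lam' ms - pAt b lam ms with hdd
  have hkey : ∀ k : Fin n, quotOf b lam' k
      = quotOf b lam k + (if (k:ℕ)+1 ≤ ms then d else 0) := by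
    intro k
    unfold quotOf
    have hsum : ∑ m ∈ Finset.Icc ((k:ℕ)+1) n, pAt b lam' m
        = ∑ m ∈ Finset.Icc ((k:ℕ)+1) n, (pAt b lam m + if m = ms then d else 0) := by
      refine Finset.sum_congr rfl (fun m hm => ?_)
      rw [Finset.mem_Icc] at hm
      by_cases hm' : m = ms
      · subst hm'; rw [if_pos rfl]; omega
      · rw [if_neg hm', hp m (by omega) (by omega) hm']; ring
    rw [hsum, Finset.sum_add_distrib, Finset.sum_ite_eq' (Finset.Icc ((k:ℕ)+1) n) ms
      (fun _ => d)]
    congr 1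
    by_cases hin : (k:ℕ)+1 ≤ ms
    · rw [if_pos (Finset.mem_Icc.mpr ⟨hin, hms.2⟩), if_pos hin]
    · rw [if_neg (fun hc => hin (Finset.mem_Icc.mp hc).1), if_neg hin]
  have hd0 : d = 0 ∨ d = 1 ∨ d = -1 := hd
  rcases hd0 with h0 | h0 | h0
  · left
    funext k
    rw [hkey k, h0]
    simp
  · right
    refine ⟨⟨ms-1, by omega⟩, Or.inl ?_⟩
    funext k
    rw [Pi.add_apply, hkey k, h0]
    unfold varpi
    have : (k ≤ (⟨ms-1, by omega⟩ : Fin n)) ↔ (k:ℕ)+1 ≤ ms := by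
      rw [Fin.le_def]; simp; omega
    by_cases hin : (k:ℕ)+1 ≤ ms
    · rw [if_pos hin, if_pos (this.mpr hin)]
    · rw [if_neg hin, if_neg (fun hc => hin (this.mp hc))]
  · right
    refine ⟨⟨ms-1, by omega⟩, Or.inr ?_⟩
    funext k
    rw [Pi.sub_apply, hkey k, h0]
    unfold varpi
    have : (k ≤ (⟨ms-1, by omega⟩ : Fin n)) ↔ (k:ℕ)+1 ≤ ms := by
      rw [Fin.le_def]; simp; omega
    by_cases hin : (k:ℕ)+1 ≤ ms
    · rw [if_pos hin, if_pos (this.mpr hin)]; ring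
    · rw [if_neg hin, if_neg (fun hc => hin (this.mp hc))]; ring

/-- the position-indexed shift determined by an index-indexed shift -/
noncomputable def Dl (n : ℕ) (lam : Fin n → ℤ) (ε : Fin n → ℤ) (m : ℕ) : ℤ :=
  if h : m - 1 < n then ε (idx n lam ⟨m-1, h⟩) else 0

lemma pAt_shift (hn : 2 ≤ n) {b : ℤ} (hb : 1 ≤ b) (lam lam' : Fin n → ℤ)
    (σ : Equiv.Perm (Fin n)) (ε : Fin n → ℤ)
    (hkey : ∀ a, key n lam' a = key n lam (σ a) + ε (σ a))
    (hrk : ∀ j, rk n lam' j = rk n lam (σ j)) {m : ℕ} (h1 : 1 ≤ m) (h2 : m ≤ n) :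
    pAt b lam' m = (KK n lam m - KK n lam (m+1) - 1
      + (Dl n lam ε m - Dl n lam ε (m+1))) / ((2*(n:ℤ)+2) * b) := by
  rw [pAt_eq hn hb lam' h1 h2,
    KK_transport lam lam' σ ε hkey hrk (by omega : 1 ≤ m) (by omega : m ≤ n+1),
    KK_transport lam lam' σ ε hkey hrk (by omega : 1 ≤ m+1) (by omega : m+1 ≤ n+1)]
  unfold Dl
  congr 1
  ring

lemma pAt_eq_of_nocross (hn : 2 ≤ n) {b : ℤ} (hb : 1 ≤ b) (lam : Fin n → ℤ) {m : ℕ}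
    (h1 : 1 ≤ m) (h2 : m ≤ n) {s : ℤ} (hs : -2 ≤ s ∧ s ≤ 2)
    (hcross : ∀ j : ℤ, ((0 < j ∧ j ≤ s) ∨ (s < j ∧ j ≤ 0)) →
      CC n lam m ≠ CC n lam (m+1) + 1 - j) :
    (KK n lam m - KK n lam (m+1) - 1 + s) / ((2*(n:ℤ)+2) * b) = pAt b lam m := by
  have hM : (0:ℤ) < (2*(n:ℤ)+2) * b := by
    have : (0:ℤ) < 2*(n:ℤ)+2 := by positivity
    positivity
  rw [pAt_eq hn hb lam h1 h2]
  refine ediv_shift_eq hM hs (fun j hj hdvd => ?_)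
  have hNd : (2*(n:ℤ)+2) ∣ (KK n lam m - KK n lam (m+1) + (j - 1)) := by
    have h1' : (2*(n:ℤ)+2) ∣ ((2*(n:ℤ)+2) * b) := ⟨b, rfl⟩
    have := dvd_trans h1' hdvd
    rwa [show KK n lam m - KK n lam (m+1) - 1 + j
      = KK n lam m - KK n lam (m+1) + (j - 1) by ring] at this
  have := dvd_resolve hn lam (m := m) (m' := m+1) ⟨h1, by omega⟩ ⟨by omega, by omega⟩
    ⟨by omega, by omega⟩ hNd
  exact hcross j hj (by omega)

lemma pAt_bound (hn : 2 ≤ n) {b : ℤ} (hb : 1 ≤ b) (lam : Fin n → ℤ) {m : ℕ}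
    (h1 : 1 ≤ m) (h2 : m ≤ n) {s : ℤ} (hs : -2 ≤ s ∧ s ≤ 2) :
    (KK n lam m - KK n lam (m+1) - 1 + s) / ((2*(n:ℤ)+2) * b) - pAt b lam m = 0 ∨
    (KK n lam m - KK n lam (m+1) - 1 + s) / ((2*(n:ℤ)+2) * b) - pAt b lam m = 1 ∨
    (KK n lam m - KK n lam (m+1) - 1 + s) / ((2*(n:ℤ)+2) * b) - pAt b lam m = -1 := by
  have h2n : (2:ℤ) ≤ (n:ℤ) := by exact_mod_cast hn
  have hM : (2:ℤ) ≤ (2*(n:ℤ)+2) * b := by nlinarith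
  rw [pAt_eq hn hb lam h1 h2]
  exact ediv_shift_bound hM hs.1 hs.2

lemma ckey_shape (lam : Fin n → ℤ) (a : Fin n) :
    (0 ≤ lam a ∧ ckey n lam a = 2*(n:ℤ) - (a:ℕ)) ∨
    (lam a < 0 ∧ ckey n lam a = ((a:ℕ):ℤ)) := by
  rcases le_or_gt 0 (lam a) with h | h
  · exact Or.inl ⟨h, ckey_pos h⟩
  · exact Or.inr ⟨h, ckey_negv h⟩

lemma key_close (hn : 2 ≤ n) (lam : Fin n → ℤ) {a c : Fin n} {e : ℤ}
    (he : -2 ≤ e ∧ e ≤ 2) (h : key n lam a = key n lam c + e) :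
    ckey n lam a = ckey n lam c + e := by
  have hba := ckey_bounds lam a
  have hbc := ckey_bounds lam c
  have hdvd : ckey n lam a - ckey n lam c - e = (2*(n:ℤ)+2) * (|lam c| - |lam a|) := by
    unfold key at h
    linarith
  set k := |lam c| - |lam a| with hk
  have hk1 : -1 ≤ k := by nlinarith
  have hk2 : k ≤ 1 := by nlinarith
  interval_cases k
  · -- ckey a - ckey c - e = -(2n+2) : forces ckey a = 0, ckey c = 2n, e = 2
    exfalso
    have hca : ckey n lam a = 0 ∧ ckey n lam c = 2*(n:ℤ) ∧ e = 2 := by omega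
    have hia := a.isLt; have hic := c.isLt
    rcases ckey_shape lam a with ⟨hsa, hva⟩ | ⟨hsa, hva⟩ <;>
      rcases ckey_shape lam c with ⟨hsc, hvc⟩ | ⟨hsc, hvc⟩ <;> try omega
    have : a = c := Fin.ext (by omega)
    rw [this] at hsa
    omega
  · omega
  · exfalso
    have hca : ckey n lam a = 2*(n:ℤ) ∧ ckey n lam c = 0 ∧ e = -2 := by omega
    have hia := a.isLt; have hic := c.isLt
    rcases ckey_shape lam a with ⟨hsa, hva⟩ | ⟨hsa, hva⟩ <;>
      rcases ckey_shape lam c with ⟨hsc, hvc⟩ | ⟨hsc, hvc⟩ <;> try omega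
    have : a = c := Fin.ext (by omega)
    rw [this] at hsa
    omega

lemma Dl_single (lam : Fin n → ℤ) (i0 : Fin n) (d : ℤ) {m : ℕ} (h1 : 1 ≤ m) (h2 : m ≤ n+1) :
    Dl n lam (fun a => if a = i0 then d else 0) m
      = if m = rk n lam i0 + 1 then d else 0 := by
  have hr := rk_lt lam i0
  unfold Dl
  rcases Nat.lt_or_ge m (n+1) with hm | hm
  · rw [dif_pos (by omega : m - 1 < n)]
    by_cases hq : m = rk n lam i0 + 1
    · subst hq
      have he : idx n lam ⟨rk n lam i0, hr⟩ = i0 := idx_of_rk lam i0 _ (by simp)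
      simp [he]
    · have hne : idx n lam ⟨m-1, by omega⟩ ≠ i0 := by
        intro hc
        have := congrArg (rk n lam) hc
        rw [rk_idx] at this
        simp at this; omega
      simp [hq, hne]
  · rw [dif_neg (by omega), if_neg (by omega)]

lemma Dl_double (lam : Fin n → ℤ) (u0 v0 : Fin n) (du dv : ℤ) (huv : u0 ≠ v0)
    {m : ℕ} (h1 : 1 ≤ m) (h2 : m ≤ n+1) :
    Dl n lam (fun a => if a = u0 then du else if a = v0 then dv else 0) m
      = if m = rk n lam u0 + 1 then du else if m = rk n lam v0 + 1 then dv else 0 := by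
  have hru := rk_lt lam u0
  have hrv := rk_lt lam v0
  unfold Dl
  rcases Nat.lt_or_ge m (n+1) with hm | hm
  · rw [dif_pos (by omega : m - 1 < n)]
    by_cases hq : m = rk n lam u0 + 1
    · subst hq
      have he : idx n lam ⟨rk n lam u0, hru⟩ = u0 := idx_of_rk lam u0 _ (by simp)
      simp [he]
    · have hne : idx n lam ⟨m-1, by omega⟩ ≠ u0 := by
        intro hc
        have := congrArg (rk n lam) hc
        rw [rk_idx] at this
        simp at this; omega
      by_cases hq' : m = rk n lam v0 + 1
      · subst hq'
        have he' : idx n lam ⟨rk n lam v0, hrv⟩ = v0 := idx_of_rk lam v0 _ (by simp)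
        have hne2 : idx n lam ⟨rk n lam v0, hrv⟩ ≠ u0 := fun hc => hne (by
          rw [show (⟨rk n lam v0 + 1 - 1, by omega⟩ : Fin n) = ⟨rk n lam v0, hrv⟩ from rfl]
          exact hc)
        simp [hq, he', hne2]
        rw [if_neg (fun hc => huv hc.symm), if_neg (fun hc => hq (by rw [hc]))]
      · have hne' : idx n lam ⟨m-1, by omega⟩ ≠ v0 := by
          intro hc
          have := congrArg (rk n lam) hc
          rw [rk_idx] at this
          simp at this; omega
        simp [hq, hq', hne, hne']
  · rw [dif_neg (by omega), if_neg (by omega), if_neg (by omega)]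

lemma case_zero (hn : 2 ≤ n) {b : ℤ} (hb : 1 ≤ b) (lam : Fin n → ℤ) :
    quotOf b (dotAct 0 lam) = quotOf b lam := by
  have hi0lt : 0 < n := by omega
  set i0 : Fin n := ⟨0, hi0lt⟩ with hi0
  set lam' := dotAct 0 lam with hl'
  have hL0 : lam' i0 = -1 - lam i0 := by simp [hl', dotAct, hi0]
  have hLa : ∀ a : Fin n, a ≠ i0 → lam' a = lam a := by
    intro a ha
    have : (a:ℕ) ≠ 0 := fun hc => ha (Fin.ext hc)
    simp [hl', dotAct, this]
  have hrkq := rk_lt lam i0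
  set q := rk n lam i0 + 1 with hqdef
  have hCCq : CC n lam q = ckey n lam i0 :=
    CC_eq_ckey' lam (by omega) (by omega) (by omega)
  rcases le_or_gt 0 (lam i0) with hs | hs
  -- λ₀ ≥ 0 : key of slot 0 goes up by 2
  · have hck : ckey n lam i0 = 2*(n:ℤ) := by rw [ckey_pos hs]; simp [hi0]
    set ε : Fin n → ℤ := fun a => if a = i0 then (2:ℤ) else 0 with hε
    have hkey : ∀ a, key n lam' a
        = key n lam ((Equiv.refl (Fin n)) a) + ε ((Equiv.refl (Fin n)) a) := by
      intro a
      simp only [Equiv.refl_apply]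
      by_cases ha : a = i0
      · subst ha
        unfold key ckey
        rw [hL0, if_neg (by omega : ¬ (0:ℤ) ≤ -1 - lam i0), if_pos hs,
          abs_of_nonneg hs, abs_of_neg (by omega : -1 - lam i0 < 0), hε]
        simp [hi0]
        ring
      · unfold key ckey
        rw [hLa a ha, hε]
        simp [ha]
    have hmono : ∀ a c, key n lam ((Equiv.refl (Fin n)) a) < key n lam ((Equiv.refl (Fin n)) c) →
        key n lam' a < key n lam' c := by
      intro a c h
      simp only [Equiv.refl_apply] at h
      rw [hkey a, hkey c]
      simp only [Equiv.refl_apply, hε]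
      by_cases hc : c = i0
      · subst hc
        by_cases ha : a = i0
        · subst ha; omega
        · rw [if_neg ha, if_pos rfl]; omega
      · by_cases ha : a = i0
        · subst ha
          rw [if_pos rfl, if_neg hc]
          have hne1 : key n lam c ≠ key n lam i0 + 1 := by
            intro hc'
            have := key_close hn lam (by omega) hc'
            have := ckey_bounds lam c
            omega
          have hne2 : key n lam c ≠ key n lam i0 + 2 := by
            intro hc'
            have := key_close hn lam (by omega) hc'
            have := ckey_bounds lam c
            omega
          omega
        · rw [if_neg ha, if_neg hc]; omega
    have hrk := rank_transport lam lam' (Equiv.refl (Fin n)) hmono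
    apply quot_eq_of_pAt
    intro m h1 h2
    rw [pAt_shift hn hb lam lam' (Equiv.refl (Fin n)) ε hkey hrk h1 h2,
      Dl_single lam i0 2 (by omega) (by omega),
      Dl_single lam i0 2 (by omega : 1 ≤ m+1) (by omega)]
    have hbm := CC_bounds lam (m := m) (by omega) (by omega)
    have hbm1 := CC_bounds lam (m := m+1) (by omega) (by omega)
    by_cases hm1 : m = q
    · rw [if_pos (by omega), if_neg (by omega), show (2:ℤ) - 0 = 2 by norm_num]
      refine pAt_eq_of_nocross hn hb lam h1 h2 (by omega) (fun j hj => ?_)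
      have : j = 1 ∨ j = 2 := by omega
      rcases this with rfl | rfl
      · have := CC_inj lam (m := m) (m' := m+1) (by omega) (by omega) (by omega) (by omega) (by omega)
        omega
      · intro hcon
        rw [← hm1] at hCCq
        omega
    · by_cases hm2 : m + 1 = q
      · rw [if_neg hm1, if_pos (by omega), show (0:ℤ) - 2 = -2 by norm_num]
        refine pAt_eq_of_nocross hn hb lam h1 h2 (by omega) (fun j hj => ?_)
        have : j = 0 ∨ j = -1 := by omega
        rw [← hm2] at hCCq
        rcases this with rfl | rfl <;> omega
      · rw [if_neg hm1, if_neg (by omega), show (0:ℤ) - 0 = 0 by norm_num]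
        refine pAt_eq_of_nocross hn hb lam h1 h2 (by omega) (fun j hj => ?_)
        omega
  -- λ₀ < 0 : key of slot 0 goes down by 2
  · have hck : ckey n lam i0 = 0 := by rw [ckey_negv hs]; simp [hi0]
    set ε : Fin n → ℤ := fun a => if a = i0 then (-2:ℤ) else 0 with hε
    have hkey : ∀ a, key n lam' a
        = key n lam ((Equiv.refl (Fin n)) a) + ε ((Equiv.refl (Fin n)) a) := by
      intro a
      simp only [Equiv.refl_apply]
      by_cases ha : a = i0
      · subst ha
        unfold key ckey
        rw [hL0, if_pos (by omega : (0:ℤ) ≤ -1 - lam i0), if_neg (not_le.mpr hs),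
          abs_of_nonneg (by omega : (0:ℤ) ≤ -1 - lam i0), abs_of_neg hs, hε]
        simp [hi0]
        ring
      · unfold key ckey
        rw [hLa a ha, hε]
        simp [ha]
    have hmono : ∀ a c, key n lam ((Equiv.refl (Fin n)) a) < key n lam ((Equiv.refl (Fin n)) c) →
        key n lam' a < key n lam' c := by
      intro a c h
      simp only [Equiv.refl_apply] at h
      rw [hkey a, hkey c]
      simp only [Equiv.refl_apply, hε]
      by_cases hc : c = i0
      · subst hc
        by_cases ha : a = i0
        · subst ha; omega
        · rw [if_neg ha, if_pos rfl]
          have hne1 : key n lam a ≠ key n lam i0 + (-1) := by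
            intro hc'
            have := key_close hn lam (by omega) hc'
            have := ckey_bounds lam a
            omega
          have hne2 : key n lam a ≠ key n lam i0 + (-2) := by
            intro hc'
            have := key_close hn lam (by omega) hc'
            have := ckey_bounds lam a
            omega
          omega
      · by_cases ha : a = i0
        · subst ha
          rw [if_pos rfl, if_neg hc]; omega
        · rw [if_neg ha, if_neg hc]; omega
    have hrk := rank_transport lam lam' (Equiv.refl (Fin n)) hmono
    apply quot_eq_of_pAt
    intro m h1 h2
    rw [pAt_shift hn hb lam lam' (Equiv.refl (Fin n)) ε hkey hrk h1 h2,
      Dl_single lam i0 (-2) (by omega) (by omega),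
      Dl_single lam i0 (-2) (by omega : 1 ≤ m+1) (by omega)]
    have hbm := CC_bounds lam (m := m) (by omega) (by omega)
    have hbm1 := CC_bounds lam (m := m+1) (by omega) (by omega)
    by_cases hm1 : m = q
    · rw [if_pos (by omega), if_neg (by omega), show (-2:ℤ) - 0 = -2 by norm_num]
      refine pAt_eq_of_nocross hn hb lam h1 h2 (by omega) (fun j hj => ?_)
      have : j = 0 ∨ j = -1 := by omega
      rw [← hm1] at hCCq
      rcases this with rfl | rfl <;> omega
    · by_cases hm2 : m + 1 = q
      · rw [if_neg hm1, if_pos (by omega), show (0:ℤ) - (-2) = 2 by norm_num]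
        refine pAt_eq_of_nocross hn hb lam h1 h2 (by omega) (fun j hj => ?_)
        have : j = 1 ∨ j = 2 := by omega
        rw [← hm2] at hCCq
        rcases this with rfl | rfl
        · have := CC_inj lam (m := m) (m' := m+1) (by omega) (by omega) (by omega) (by omega) (by omega)
          omega
        · omega
      · rw [if_neg hm1, if_neg (by omega), show (0:ℤ) - 0 = 0 by norm_num]
        refine pAt_eq_of_nocross hn hb lam h1 h2 (by omega) (fun j hj => ?_)
        omega

lemma case_n (hn : 2 ≤ n) {b : ℤ} (hb : 1 ≤ b) (lam : Fin n → ℤ)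
    (h0 : lam ⟨n-1, by omega⟩ ≠ 0) :
    quotOf b (dotAct n lam) = quotOf b lam ∨
      ∃ j : Fin n, quotOf b (dotAct n lam) = quotOf b lam + varpi j ∨
        quotOf b (dotAct n lam) = quotOf b lam - varpi j := by
  have hi0lt : n - 1 < n := by omega
  set i0 : Fin n := ⟨n-1, hi0lt⟩ with hi0
  set lam' := dotAct n lam with hl'
  have hL0 : lam' i0 = - lam i0 := by
    show dotAct n lam i0 = - lam i0
    simp only [dotAct]
    rw [if_neg (by omega : ¬ n = 0), if_pos trivial, if_pos (by show n - 1 + 1 = n; omega)]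
  have hLa : ∀ a : Fin n, a ≠ i0 → lam' a = lam a := by
    intro a ha
    have hav := a.isLt
    have hc1 : (a:ℕ) + 1 ≠ n := fun hc => ha (Fin.ext (by simp [hi0]; omega))
    show dotAct n lam a = lam a
    simp only [dotAct]
    rw [if_neg (by omega : ¬ n = 0), if_pos trivial, if_neg hc1]
  have hrkq := rk_lt lam i0
  set q := rk n lam i0 + 1 with hqdef
  have hCCq : CC n lam q = ckey n lam i0 :=
    CC_eq_ckey' lam (by omega) (by omega) (by omega)
  have hcast : ((n-1 : ℕ) : ℤ) = (n:ℤ) - 1 := by push_cast [Nat.cast_sub (by omega : 1 ≤ n)]; ring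
  rcases lt_or_gt_of_ne h0 with hs | hs
  -- λ_{n-1} < 0 : key goes up by 2 (from residue n-1 to n+1)
  · have hck : ckey n lam i0 = (n:ℤ) - 1 := by rw [ckey_negv hs]; simp [hi0, hcast]
    set ε : Fin n → ℤ := fun a => if a = i0 then (2:ℤ) else 0 with hε
    have hkey : ∀ a, key n lam' a
        = key n lam ((Equiv.refl (Fin n)) a) + ε ((Equiv.refl (Fin n)) a) := by
      intro a
      simp only [Equiv.refl_apply]
      by_cases ha : a = i0
      · subst ha
        unfold key ckey
        rw [hL0, if_pos (by omega : (0:ℤ) ≤ - lam i0), if_neg (not_le.mpr hs),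
          abs_of_nonneg (by omega : (0:ℤ) ≤ - lam i0), abs_of_neg hs, hε]
        simp [hi0, hcast]
        ring
      · unfold key ckey
        rw [hLa a ha, hε]
        simp [ha]
    have hmono : ∀ a c, key n lam ((Equiv.refl (Fin n)) a) < key n lam ((Equiv.refl (Fin n)) c) →
        key n lam' a < key n lam' c := by
      intro a c h
      simp only [Equiv.refl_apply] at h
      rw [hkey a, hkey c]
      simp only [Equiv.refl_apply, hε]
      by_cases hc : c = i0
      · subst hc
        by_cases ha : a = i0
        · subst ha; omega
        · rw [if_neg ha, if_pos rfl]; omega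
      · by_cases ha : a = i0
        · subst ha
          rw [if_pos rfl, if_neg hc]
          have hia := c.isLt
          have hne1 : key n lam c ≠ key n lam i0 + 1 := by
            intro hc'
            have hcl := key_close hn lam (by omega) hc'
            rcases ckey_shape lam c with ⟨hsc, hvc⟩ | ⟨hsc, hvc⟩ <;> omega
          have hne2 : key n lam c ≠ key n lam i0 + 2 := by
            intro hc'
            have hcl := key_close hn lam (by omega) hc'
            rcases ckey_shape lam c with ⟨hsc, hvc⟩ | ⟨hsc, hvc⟩
            · have hcv : (c:ℕ) = n - 1 := by omega
              have hidx : c = i0 := Fin.ext (by simp [hi0, hcv])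
              rw [hidx] at hsc
              omega
            · omega
          omega
        · rw [if_neg ha, if_neg hc]; omega
    have hrk := rank_transport lam lam' (Equiv.refl (Fin n)) hmono
    refine quot_shift lam lam' q ⟨by omega, by omega⟩ (fun m h1 h2 hm1 => ?_) ?_
    · rw [pAt_shift hn hb lam lam' (Equiv.refl (Fin n)) ε hkey hrk h1 h2,
        Dl_single lam i0 2 (by omega) (by omega),
        Dl_single lam i0 2 (by omega : 1 ≤ m+1) (by omega)]
      have hbm := CC_bounds lam (m := m) (by omega) (by omega)
      have hbm1 := CC_bounds lam (m := m+1) (by omega) (by omega)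
      by_cases hm2 : m + 1 = q
      · rw [if_neg hm1, if_pos (by omega), show (0:ℤ) - 2 = -2 by norm_num]
        refine pAt_eq_of_nocross hn hb lam h1 h2 (by omega) (fun j hj => ?_)
        have hj' : j = 0 ∨ j = -1 := by omega
        rw [← hm2] at hCCq
        intro hcon
        rcases CC_cases lam (m := m) (by omega) (by omega : m ≤ n+1) with
          ⟨hmv, hv⟩ | ⟨hmv, hlt, (⟨hsv, hv⟩ | ⟨hsv, hv⟩)⟩
        · omega
        · -- CC m = 2n - t with t < n ; CC m = n or n+1 forces t = n or n-1
          have hit := (idx n lam ⟨m-1, hlt⟩).isLt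
          have : (idx n lam ⟨m-1, hlt⟩ : ℕ) = n - 1 := by omega
          have hidx : idx n lam ⟨m-1, hlt⟩ = i0 := Fin.ext (by simp [hi0, this])
          rw [hidx] at hsv
          omega
        · have hit := (idx n lam ⟨m-1, hlt⟩).isLt
          omega
      · rw [if_neg hm1, if_neg (by omega), show (0:ℤ) - 0 = 0 by norm_num]
        refine pAt_eq_of_nocross hn hb lam h1 h2 (by omega) (fun j hj => ?_)
        omega
    · rw [pAt_shift hn hb lam lam' (Equiv.refl (Fin n)) ε hkey hrk (by omega) (by omega),
        Dl_single lam i0 2 (by omega) (by omega),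
        Dl_single lam i0 2 (by omega : 1 ≤ q+1) (by omega)]
      rw [if_pos rfl, if_neg (by omega), show (2:ℤ) - 0 = 2 by norm_num]
      exact pAt_bound hn hb lam (by omega) (by omega) (by omega)
  -- λ_{n-1} > 0 : key goes down by 2
  · have hck : ckey n lam i0 = (n:ℤ) + 1 := by
      rw [ckey_pos (by omega : (0:ℤ) ≤ lam i0)]; simp [hi0, hcast]; omega
    set ε : Fin n → ℤ := fun a => if a = i0 then (-2:ℤ) else 0 with hε
    have hkey : ∀ a, key n lam' a
        = key n lam ((Equiv.refl (Fin n)) a) + ε ((Equiv.refl (Fin n)) a) := by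
      intro a
      simp only [Equiv.refl_apply]
      by_cases ha : a = i0
      · subst ha
        unfold key ckey
        rw [hL0, if_neg (by omega : ¬ (0:ℤ) ≤ - lam i0), if_pos (by omega : (0:ℤ) ≤ lam i0),
          abs_of_neg (by omega : - lam i0 < 0), abs_of_nonneg (by omega : (0:ℤ) ≤ lam i0), hε]
        simp [hi0, hcast]
        ring
      · unfold key ckey
        rw [hLa a ha, hε]
        simp [ha]
    have hmono : ∀ a c, key n lam ((Equiv.refl (Fin n)) a) < key n lam ((Equiv.refl (Fin n)) c) →
        key n lam' a < key n lam' c := by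
      intro a c h
      simp only [Equiv.refl_apply] at h
      rw [hkey a, hkey c]
      simp only [Equiv.refl_apply, hε]
      by_cases hc : c = i0
      · subst hc
        by_cases ha : a = i0
        · subst ha; omega
        · rw [if_neg ha, if_pos rfl]
          have hia := a.isLt
          have hne1 : key n lam a ≠ key n lam i0 + (-1) := by
            intro hc'
            have hcl := key_close hn lam (by omega) hc'
            rcases ckey_shape lam a with ⟨hsc, hvc⟩ | ⟨hsc, hvc⟩ <;> omega
          have hne2 : key n lam a ≠ key n lam i0 + (-2) := by
            intro hc'
            have hcl := key_close hn lam (by omega) hc'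
            rcases ckey_shape lam a with ⟨hsc, hvc⟩ | ⟨hsc, hvc⟩
            · omega
            · have : (a:ℕ) = n - 1 := by omega
              have hidx : a = i0 := Fin.ext (by simp [hi0, this])
              exact ha hidx
          omega
      · by_cases ha : a = i0
        · subst ha
          rw [if_pos rfl, if_neg hc]; omega
        · rw [if_neg ha, if_neg hc]; omega
    have hrk := rank_transport lam lam' (Equiv.refl (Fin n)) hmono
    refine quot_shift lam lam' q ⟨by omega, by omega⟩ (fun m h1 h2 hm1 => ?_) ?_
    · rw [pAt_shift hn hb lam lam' (Equiv.refl (Fin n)) ε hkey hrk h1 h2,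
        Dl_single lam i0 (-2) (by omega) (by omega),
        Dl_single lam i0 (-2) (by omega : 1 ≤ m+1) (by omega)]
      have hbm := CC_bounds lam (m := m) (by omega) (by omega)
      have hbm1 := CC_bounds lam (m := m+1) (by omega) (by omega)
      by_cases hm2 : m + 1 = q
      · rw [if_neg hm1, if_pos (by omega), show (0:ℤ) - (-2) = 2 by norm_num]
        refine pAt_eq_of_nocross hn hb lam h1 h2 (by omega) (fun j hj => ?_)
        have hj' : j = 1 ∨ j = 2 := by omega
        rw [← hm2] at hCCq
        intro hcon
        rcases hj' with rfl | rfl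
        · exact CC_inj lam (m := m) (m' := m+1) (by omega) (by omega) (by omega) (by omega)
            (by omega) (by omega)
        · -- CC m = CC q - 1 = n : impossible
          rcases CC_cases lam (m := m) (by omega) (by omega : m ≤ n+1) with
            ⟨hmv, hv⟩ | ⟨hmv, hlt, (⟨hsv, hv⟩ | ⟨hsv, hv⟩)⟩
          · omega
          · have hit := (idx n lam ⟨m-1, hlt⟩).isLt
            omega
          · have hit := (idx n lam ⟨m-1, hlt⟩).isLt
            have : (idx n lam ⟨m-1, hlt⟩ : ℕ) = n - 1 := by omega
            have hidx : idx n lam ⟨m-1, hlt⟩ = i0 := Fin.ext (by simp [hi0, this])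
            rw [hidx] at hsv
            omega
      · rw [if_neg hm1, if_neg (by omega), show (0:ℤ) - 0 = 0 by norm_num]
        refine pAt_eq_of_nocross hn hb lam h1 h2 (by omega) (fun j hj => ?_)
        omega
    · rw [pAt_shift hn hb lam lam' (Equiv.refl (Fin n)) ε hkey hrk (by omega) (by omega),
        Dl_single lam i0 (-2) (by omega) (by omega),
        Dl_single lam i0 (-2) (by omega : 1 ≤ q+1) (by omega)]
      rw [if_pos rfl, if_neg (by omega), show (-2:ℤ) - 0 = -2 by norm_num]
      exact pAt_bound hn hb lam (by omega) (by omega) (by omega)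

lemma ckey_pin_pos (lam : Fin n → ℤ) {x t : Fin n}
    (hv : ckey n lam x = 2*(n:ℤ) - ((t:ℕ):ℤ)) : x = t ∧ 0 ≤ lam x := by
  have hxv := x.isLt; have htv := t.isLt
  rcases ckey_shape lam x with ⟨hs, he⟩ | ⟨hs, he⟩
  · exact ⟨Fin.ext (by omega), hs⟩
  · omega

lemma ckey_pin_neg (lam : Fin n → ℤ) {x t : Fin n}
    (hv : ckey n lam x = ((t:ℕ):ℤ)) : x = t ∧ lam x < 0 := by
  have hxv := x.isLt; have htv := t.isLt
  rcases ckey_shape lam x with ⟨hs, he⟩ | ⟨hs, he⟩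
  · omega
  · exact ⟨Fin.ext (by omega), hs⟩

lemma CC_pin_pos (lam : Fin n → ℤ) {m : ℕ} (h1 : 1 ≤ m) (h2 : m ≤ n+1) {t : Fin n}
    (hv : CC n lam m = 2*(n:ℤ) - ((t:ℕ):ℤ)) : m = rk n lam t + 1 ∧ 0 ≤ lam t := by
  have htv := t.isLt
  rcases CC_cases lam h1 h2 with ⟨hm, he⟩ | ⟨hm, hlt, hsh⟩
  · omega
  · have hck : ckey n lam (idx n lam ⟨m-1, hlt⟩) = 2*(n:ℤ) - ((t:ℕ):ℤ) := by
      rw [← CC_eq_ckey lam h1 hm]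
      exact hv
    obtain ⟨he, hs⟩ := ckey_pin_pos lam hck
    have := rk_idx lam ⟨m-1, hlt⟩
    rw [he] at this hs
    simp at this
    exact ⟨by omega, hs⟩

lemma CC_pin_neg (lam : Fin n → ℤ) {m : ℕ} (h1 : 1 ≤ m) (h2 : m ≤ n+1) {t : Fin n}
    (hv : CC n lam m = ((t:ℕ):ℤ)) (hne : 2 ≤ n) : m = rk n lam t + 1 ∧ lam t < 0 := by
  have htv := t.isLt
  rcases CC_cases lam h1 h2 with ⟨hm, he⟩ | ⟨hm, hlt, hsh⟩
  · omega
  · have hck : ckey n lam (idx n lam ⟨m-1, hlt⟩) = ((t:ℕ):ℤ) := by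
      rw [← CC_eq_ckey lam h1 hm]
      exact hv
    obtain ⟨he, hs⟩ := ckey_pin_neg lam hck
    have := rk_idx lam ⟨m-1, hlt⟩
    rw [he] at this hs
    simp at this
    exact ⟨by omega, hs⟩

lemma mulN_pos (hn : 2 ≤ n) {t : ℤ} (h : 0 < (2*(n:ℤ)+2) * t) : 2*(n:ℤ)+2 ≤ (2*(n:ℤ)+2) * t := by
  have hN : (0:ℤ) < 2*(n:ℤ)+2 := by positivity
  have ht : 1 ≤ t := by nlinarith
  nlinarith

lemma case_swap_pp (hn : 2 ≤ n) {b : ℤ} (hb : 1 ≤ b) (lam lam' : Fin n → ℤ) (a0 b0 : Fin n)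
    (hab : (b0:ℕ) = (a0:ℕ)+1) (hL1 : lam' a0 = lam b0) (hL2 : lam' b0 = lam a0)
    (hL3 : ∀ a, a ≠ a0 → a ≠ b0 → lam' a = lam a)
    (hsa : 0 ≤ lam a0) (hsb : 0 ≤ lam b0) (hv : lam a0 ≠ lam b0) :
    quotOf b lam' = quotOf b lam ∨
      ∃ j : Fin n, quotOf b lam' = quotOf b lam + varpi j ∨
        quotOf b lam' = quotOf b lam - varpi j := by
  have hav := a0.isLt; have hbv := b0.isLt
  have hane : a0 ≠ b0 := fun h => by rw [h] at hab; omega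
  have hbne : b0 ≠ a0 := fun h => hane h.symm
  have hcast : ((b0:ℕ):ℤ) = ((a0:ℕ):ℤ) + 1 := by rw [hab]; push_cast; ring
  have ea : (if a0 = a0 then (-1:ℤ) else if a0 = b0 then (1:ℤ) else 0) = -1 := by simp
  have eb : (if b0 = a0 then (-1:ℤ) else if b0 = b0 then (1:ℤ) else 0) = 1 := by simp [hbne]
  have eo : ∀ z : Fin n, z ≠ a0 → z ≠ b0 →
      (if z = a0 then (-1:ℤ) else if z = b0 then (1:ℤ) else 0) = 0 := by
    intro z h1 h2; simp [h1, h2]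
  have hkey : ∀ a, key n lam' a = key n lam ((Equiv.swap a0 b0) a)
      + (fun x => if x = a0 then (-1:ℤ) else if x = b0 then (1:ℤ) else 0)
        ((Equiv.swap a0 b0) a) := by
    intro a
    by_cases ha : a = a0
    · rw [ha, Equiv.swap_apply_left]
      show key n lam' a0 = key n lam b0 + (if b0 = a0 then (-1:ℤ) else if b0 = b0 then 1 else 0)
      rw [eb]
      unfold key ckey
      rw [hL1, if_pos hsb, if_pos hsb, hcast]
      ring
    · by_cases hb' : a = b0
      · rw [hb', Equiv.swap_apply_right]
        show key n lam' b0 = key n lam a0 + (if a0 = a0 then (-1:ℤ) else if a0 = b0 then 1 else 0)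
        rw [ea]
        unfold key ckey
        rw [hL2, if_pos hsa, if_pos hsa, hcast]
        ring
      · rw [Equiv.swap_apply_of_ne_of_ne ha hb']
        show key n lam' a = key n lam a + (if a = a0 then (-1:ℤ) else if a = b0 then 1 else 0)
        rw [eo a ha hb']
        unfold key ckey
        rw [hL3 a ha hb']
        ring
  have habs : |lam a0| ≠ |lam b0| := by
    rw [abs_of_nonneg hsa, abs_of_nonneg hsb]; exact hv
  have hdpair : key n lam a0 - key n lam b0 = (2*(n:ℤ)+2)*(|lam a0| - |lam b0|) + 1 := by
    unfold key
    rw [ckey_pos hsa, ckey_pos hsb, hcast]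
    ring
  have hmono' : ∀ x y, key n lam x < key n lam y →
      key n lam x + (if x = a0 then (-1:ℤ) else if x = b0 then (1:ℤ) else 0)
        < key n lam y + (if y = a0 then (-1:ℤ) else if y = b0 then (1:ℤ) else 0) := by
    intro x y h
    by_cases hx1 : x = a0
    · rw [hx1] at h ⊢
      rw [ea]
      by_cases hy1 : y = a0
      · rw [hy1] at h; omega
      · by_cases hy2 : y = b0
        · rw [hy2] at h ⊢
          rw [eb]
          omega
        · rw [eo y hy1 hy2]; omega
    · by_cases hx2 : x = b0
      · rw [hx2] at h ⊢
        rw [eb]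
        by_cases hy1 : y = a0
        · rw [hy1] at h ⊢
          rw [ea]
          rcases lt_trichotomy (|lam a0| - |lam b0|) 0 with ht | ht | ht
          · have : (2*(n:ℤ)+2)*(|lam a0| - |lam b0|)
                ≤ (2*(n:ℤ)+2)*(-1) := mul_le_mul_of_nonneg_left (by omega) (by positivity)
            omega
          · exact absurd (by omega : |lam a0| = |lam b0|) habs
          · have := mulN_pos hn (t := |lam a0| - |lam b0|) (by positivity)
            omega
        · by_cases hy2 : y = b0
          · rw [hy2] at h; omega
          · rw [eo y hy1 hy2]
            have hex : key n lam y ≠ key n lam b0 + 1 := by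
              intro hc
              have hcl := key_close hn lam (e := 1) (by omega) hc
              rw [ckey_pos hsb, hcast] at hcl
              obtain ⟨he, _⟩ := ckey_pin_pos lam (t := a0) (x := y) (by rw [hcl]; ring)
              exact hy1 he
            omega
      · rw [eo x hx1 hx2]
        by_cases hy1 : y = a0
        · rw [hy1] at h ⊢
          rw [ea]
          have hex : key n lam a0 ≠ key n lam x + 1 := by
            intro hc
            have hcl := key_close hn lam (e := 1) (by omega) hc
            rw [ckey_pos hsa] at hcl
            obtain ⟨he, _⟩ := ckey_pin_pos lam (t := b0) (x := x) (by omega)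
            exact hx2 he
          omega
        · by_cases hy2 : y = b0
          · rw [hy2] at h ⊢
            rw [eb]
            omega
          · rw [eo y hy1 hy2]
            omega
  have hrk := rank_transport lam lam' (Equiv.swap a0 b0)
    (fun a c h => by rw [hkey a, hkey c]; exact hmono' _ _ h)
  have hrka := rk_lt lam a0
  have hrkb := rk_lt lam b0
  have hqne : rk n lam a0 ≠ rk n lam b0 := fun hc => hane (rk_inj lam hc)
  have hCCq0 : CC n lam (rk n lam a0 + 1) = 2*(n:ℤ) - ((a0:ℕ):ℤ) := by
    rw [CC_eq_ckey' lam (i := a0) (by omega) (by omega) (by omega), ckey_pos hsa]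
  have hCCq1 : CC n lam (rk n lam b0 + 1) = 2*(n:ℤ) - ((b0:ℕ):ℤ) := by
    rw [CC_eq_ckey' lam (i := b0) (by omega) (by omega) (by omega), ckey_pos hsb]
  refine quot_shift lam lam' (min (rk n lam a0 + 1) (rk n lam b0 + 1))
    ⟨by omega, by omega⟩ (fun m h1 h2 hm => ?_) ?_
  · rw [pAt_shift hn hb lam lam' (Equiv.swap a0 b0)
      (fun x => if x = a0 then (-1:ℤ) else if x = b0 then (1:ℤ) else 0) hkey hrk h1 h2,
      Dl_double lam a0 b0 (-1) 1 hane (by omega) (by omega),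
      Dl_double lam a0 b0 (-1) 1 hane (by omega : 1 ≤ m+1) (by omega)]
    by_cases h10 : m = rk n lam a0 + 1
    · have hna : m + 1 ≠ rk n lam b0 + 1 := by
        intro hc; exact hm (by omega)
      rw [if_pos h10, if_neg (by omega : ¬ m + 1 = rk n lam a0 + 1), if_neg hna,
        show (-1:ℤ) - 0 = -1 by norm_num]
      refine pAt_eq_of_nocross hn hb lam h1 h2 (by omega) (fun j hj => ?_)
      have hj0 : j = 0 := by omega
      subst hj0
      intro hcon
      rw [← h10] at hCCq0
      rw [hCCq0] at hcon
      obtain ⟨he, _⟩ := CC_pin_pos lam (m := m+1) (by omega) (by omega) (t := b0)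
        (by rw [hcast]; omega)
      exact hna (by omega)
    · by_cases h20 : m = rk n lam b0 + 1
      · have hqlt : rk n lam a0 + 1 < rk n lam b0 + 1 := by
          rcases Nat.lt_or_ge (rk n lam a0 + 1) (rk n lam b0 + 1) with h | h
          · exact h
          · exact absurd (by omega : m = min (rk n lam a0 + 1) (rk n lam b0 + 1)) hm
        rw [if_neg h10, if_pos h20, if_neg (by omega : ¬ m + 1 = rk n lam a0 + 1),
          if_neg (by omega : ¬ m + 1 = rk n lam b0 + 1), show (1:ℤ) - 0 = 1 by norm_num]
        refine pAt_eq_of_nocross hn hb lam h1 h2 (by omega) (fun j hj => ?_)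
        have hj0 : j = 1 := by omega
        subst hj0
        intro hcon
        exact CC_inj lam (m := m) (m' := m+1) (by omega) (by omega) (by omega) (by omega)
          (by omega) (by omega)
      · by_cases h30 : m + 1 = rk n lam a0 + 1
        · rw [if_neg h10, if_neg h20, if_pos h30,
            show (0:ℤ) - (-1) = 1 by norm_num]
          refine pAt_eq_of_nocross hn hb lam h1 h2 (by omega) (fun j hj => ?_)
          have hj0 : j = 1 := by omega
          subst hj0
          intro hcon
          exact CC_inj lam (m := m) (m' := m+1) (by omega) (by omega) (by omega) (by omega)
            (by omega) (by omega)
        · by_cases h40 : m + 1 = rk n lam b0 + 1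
          · rw [if_neg h10, if_neg h20, if_neg h30, if_pos h40,
              show (0:ℤ) - 1 = -1 by norm_num]
            refine pAt_eq_of_nocross hn hb lam h1 h2 (by omega) (fun j hj => ?_)
            have hj0 : j = 0 := by omega
            subst hj0
            intro hcon
            rw [← h40] at hCCq1
            rw [hCCq1] at hcon
            obtain ⟨he, _⟩ := CC_pin_pos lam (m := m) (by omega) (by omega) (t := a0)
              (by rw [hcast] at hcon; omega)
            exact h10 he
          · rw [if_neg h10, if_neg h20, if_neg h30, if_neg h40,
              show (0:ℤ) - 0 = 0 by norm_num]
            refine pAt_eq_of_nocross hn hb lam h1 h2 (by omega) (fun j hj => ?_)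
            omega
  · rw [pAt_shift hn hb lam lam' (Equiv.swap a0 b0)
      (fun x => if x = a0 then (-1:ℤ) else if x = b0 then (1:ℤ) else 0) hkey hrk
        (by omega) (by omega),
      Dl_double lam a0 b0 (-1) 1 hane (by omega) (by omega),
      Dl_double lam a0 b0 (-1) 1 hane
        (by omega : 1 ≤ min (rk n lam a0 + 1) (rk n lam b0 + 1) + 1) (by omega)]
    refine pAt_bound hn hb lam (by omega) (by omega) ⟨?_, ?_⟩ <;> split_ifs <;> omega

lemma case_swap_mm (hn : 2 ≤ n) {b : ℤ} (hb : 1 ≤ b) (lam lam' : Fin n → ℤ) (a0 b0 : Fin n)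
    (hab : (b0:ℕ) = (a0:ℕ)+1) (hL1 : lam' a0 = lam b0) (hL2 : lam' b0 = lam a0)
    (hL3 : ∀ a, a ≠ a0 → a ≠ b0 → lam' a = lam a)
    (hsa : lam a0 < 0) (hsb : lam b0 < 0) (hv : lam a0 ≠ lam b0) :
    quotOf b lam' = quotOf b lam ∨
      ∃ j : Fin n, quotOf b lam' = quotOf b lam + varpi j ∨
        quotOf b lam' = quotOf b lam - varpi j := by
  have hav := a0.isLt; have hbv := b0.isLt
  have hane : a0 ≠ b0 := fun h => by rw [h] at hab; omega
  have hbne : b0 ≠ a0 := fun h => hane h.symm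
  have hcast : ((b0:ℕ):ℤ) = ((a0:ℕ):ℤ) + 1 := by rw [hab]; push_cast; ring
  have ea : (if a0 = a0 then (1:ℤ) else if a0 = b0 then (-1:ℤ) else 0) = 1 := by simp
  have eb : (if b0 = a0 then (1:ℤ) else if b0 = b0 then (-1:ℤ) else 0) = -1 := by simp [hbne]
  have eo : ∀ z : Fin n, z ≠ a0 → z ≠ b0 →
      (if z = a0 then (1:ℤ) else if z = b0 then (-1:ℤ) else 0) = 0 := by
    intro z h1 h2; simp [h1, h2]
  have hkey : ∀ a, key n lam' a = key n lam ((Equiv.swap a0 b0) a)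
      + (fun x => if x = a0 then (1:ℤ) else if x = b0 then (-1:ℤ) else 0)
        ((Equiv.swap a0 b0) a) := by
    intro a
    by_cases ha : a = a0
    · rw [ha, Equiv.swap_apply_left]
      show key n lam' a0 = key n lam b0 + (if b0 = a0 then (1:ℤ) else if b0 = b0 then (-1:ℤ) else 0)
      rw [eb]
      unfold key ckey
      rw [hL1, if_neg (not_le.mpr hsb), if_neg (not_le.mpr hsb), hcast]
      ring
    · by_cases hb' : a = b0
      · rw [hb', Equiv.swap_apply_right]
        show key n lam' b0 = key n lam a0 + (if a0 = a0 then (1:ℤ) else if a0 = b0 then (-1:ℤ) else 0)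
        rw [ea]
        unfold key ckey
        rw [hL2, if_neg (not_le.mpr hsa), if_neg (not_le.mpr hsa), hcast]
        ring
      · rw [Equiv.swap_apply_of_ne_of_ne ha hb']
        show key n lam' a = key n lam a + (if a = a0 then (1:ℤ) else if a = b0 then (-1:ℤ) else 0)
        rw [eo a ha hb']
        unfold key ckey
        rw [hL3 a ha hb']
        ring
  have habs : |lam a0| ≠ |lam b0| := by
    rw [abs_of_neg hsa, abs_of_neg hsb]; intro hc; exact hv (by omega)
  have hdpair : key n lam b0 - key n lam a0 = (2*(n:ℤ)+2)*(|lam b0| - |lam a0|) + 1 := by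
    unfold key
    rw [ckey_negv hsa, ckey_negv hsb, hcast]
    ring
  have hmono' : ∀ x y, key n lam x < key n lam y →
      key n lam x + (if x = a0 then (1:ℤ) else if x = b0 then (-1:ℤ) else 0)
        < key n lam y + (if y = a0 then (1:ℤ) else if y = b0 then (-1:ℤ) else 0) := by
    intro x y h
    by_cases hx1 : x = a0
    · rw [hx1] at h ⊢
      rw [ea]
      by_cases hy1 : y = a0
      · rw [hy1] at h; omega
      · by_cases hy2 : y = b0
        · rw [hy2] at h ⊢
          rw [eb]
          rcases lt_trichotomy (|lam b0| - |lam a0|) 0 with ht | ht | ht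
          · have : (2*(n:ℤ)+2)*(|lam b0| - |lam a0|)
                ≤ (2*(n:ℤ)+2)*(-1) := mul_le_mul_of_nonneg_left (by omega) (by positivity)
            omega
          · exact absurd (by omega : |lam a0| = |lam b0|) habs
          · have := mulN_pos hn (t := |lam b0| - |lam a0|) (by positivity)
            omega
        · rw [eo y hy1 hy2]
          have hex : key n lam y ≠ key n lam a0 + 1 := by
            intro hc
            have hcl := key_close hn lam (e := 1) (by omega) hc
            rw [ckey_negv hsa] at hcl
            obtain ⟨he, _⟩ := ckey_pin_neg lam (t := b0) (x := y) (by rw [hcl, hcast])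
            exact hy2 he
          omega
    · by_cases hx2 : x = b0
      · rw [hx2] at h ⊢
        rw [eb]
        by_cases hy1 : y = a0
        · rw [hy1] at h ⊢
          rw [ea]
          omega
        · by_cases hy2 : y = b0
          · rw [hy2] at h; omega
          · rw [eo y hy1 hy2]
            omega
      · rw [eo x hx1 hx2]
        by_cases hy1 : y = a0
        · rw [hy1] at h ⊢
          rw [ea]
          omega
        · by_cases hy2 : y = b0
          · rw [hy2] at h ⊢
            rw [eb]
            have hex : key n lam b0 ≠ key n lam x + 1 := by
              intro hc
              have hcl := key_close hn lam (e := 1) (by omega) hc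
              rw [ckey_negv hsb] at hcl
              obtain ⟨he, _⟩ := ckey_pin_neg lam (t := a0) (x := x) (by omega)
              exact hx1 he
            omega
          · rw [eo y hy1 hy2]
            omega
  have hrk := rank_transport lam lam' (Equiv.swap a0 b0)
    (fun a c h => by rw [hkey a, hkey c]; exact hmono' _ _ h)
  have hrka := rk_lt lam a0
  have hrkb := rk_lt lam b0
  have hqne : rk n lam a0 ≠ rk n lam b0 := fun hc => hane (rk_inj lam hc)
  have hCCq0 : CC n lam (rk n lam a0 + 1) = ((a0:ℕ):ℤ) := by
    rw [CC_eq_ckey' lam (i := a0) (by omega) (by omega) (by omega), ckey_negv hsa]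
  have hCCq1 : CC n lam (rk n lam b0 + 1) = ((b0:ℕ):ℤ) := by
    rw [CC_eq_ckey' lam (i := b0) (by omega) (by omega) (by omega), ckey_negv hsb]
  refine quot_shift lam lam' (min (rk n lam a0 + 1) (rk n lam b0 + 1))
    ⟨by omega, by omega⟩ (fun m h1 h2 hm => ?_) ?_
  · rw [pAt_shift hn hb lam lam' (Equiv.swap a0 b0)
      (fun x => if x = a0 then (1:ℤ) else if x = b0 then (-1:ℤ) else 0) hkey hrk h1 h2,
      Dl_double lam a0 b0 1 (-1) hane (by omega) (by omega),
      Dl_double lam a0 b0 1 (-1) hane (by omega : 1 ≤ m+1) (by omega)]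
    by_cases h10 : m = rk n lam a0 + 1
    · have hna : m + 1 ≠ rk n lam b0 + 1 := by
        intro hc; exact hm (by omega)
      rw [if_pos h10, if_neg (by omega : ¬ m + 1 = rk n lam a0 + 1), if_neg hna,
        show (1:ℤ) - 0 = 1 by norm_num]
      refine pAt_eq_of_nocross hn hb lam h1 h2 (by omega) (fun j hj => ?_)
      have hj0 : j = 1 := by omega
      subst hj0
      intro hcon
      exact CC_inj lam (m := m) (m' := m+1) (by omega) (by omega) (by omega) (by omega)
        (by omega) (by omega)
    · by_cases h20 : m = rk n lam b0 + 1
      · have hqlt : rk n lam a0 + 1 < rk n lam b0 + 1 := by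
          rcases Nat.lt_or_ge (rk n lam a0 + 1) (rk n lam b0 + 1) with h | h
          · exact h
          · exact absurd (by omega : m = min (rk n lam a0 + 1) (rk n lam b0 + 1)) hm
        rw [if_neg h10, if_pos h20, if_neg (by omega : ¬ m + 1 = rk n lam a0 + 1),
          if_neg (by omega : ¬ m + 1 = rk n lam b0 + 1), show (-1:ℤ) - 0 = -1 by norm_num]
        refine pAt_eq_of_nocross hn hb lam h1 h2 (by omega) (fun j hj => ?_)
        have hj0 : j = 0 := by omega
        subst hj0
        intro hcon
        rw [← h20] at hCCq1
        rw [hCCq1] at hcon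
        obtain ⟨he, _⟩ := CC_pin_neg lam (m := m+1) (by omega) (by omega) (t := a0)
          (by rw [hcast] at hcon; omega) hn
        omega
      · by_cases h30 : m + 1 = rk n lam a0 + 1
        · rw [if_neg h10, if_neg h20, if_pos h30,
            show (0:ℤ) - 1 = -1 by norm_num]
          refine pAt_eq_of_nocross hn hb lam h1 h2 (by omega) (fun j hj => ?_)
          have hj0 : j = 0 := by omega
          subst hj0
          intro hcon
          rw [← h30] at hCCq0
          rw [hCCq0] at hcon
          obtain ⟨he, _⟩ := CC_pin_neg lam (m := m) (by omega) (by omega) (t := b0)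
            (by rw [hcast]; omega) hn
          exact h20 he
        · by_cases h40 : m + 1 = rk n lam b0 + 1
          · rw [if_neg h10, if_neg h20, if_neg h30, if_pos h40,
              show (0:ℤ) - (-1) = 1 by norm_num]
            refine pAt_eq_of_nocross hn hb lam h1 h2 (by omega) (fun j hj => ?_)
            have hj0 : j = 1 := by omega
            subst hj0
            intro hcon
            exact CC_inj lam (m := m) (m' := m+1) (by omega) (by omega) (by omega) (by omega)
              (by omega) (by omega)
          · rw [if_neg h10, if_neg h20, if_neg h30, if_neg h40,
              show (0:ℤ) - 0 = 0 by norm_num]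
            refine pAt_eq_of_nocross hn hb lam h1 h2 (by omega) (fun j hj => ?_)
            omega
  · rw [pAt_shift hn hb lam lam' (Equiv.swap a0 b0)
      (fun x => if x = a0 then (1:ℤ) else if x = b0 then (-1:ℤ) else 0) hkey hrk
        (by omega) (by omega),
      Dl_double lam a0 b0 1 (-1) hane (by omega) (by omega),
      Dl_double lam a0 b0 1 (-1) hane
        (by omega : 1 ≤ min (rk n lam a0 + 1) (rk n lam b0 + 1) + 1) (by omega)]
    refine pAt_bound hn hb lam (by omega) (by omega) ⟨?_, ?_⟩ <;> split_ifs <;> omega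

lemma case_swap_pm (hn : 2 ≤ n) {b : ℤ} (hb : 1 ≤ b) (lam lam' : Fin n → ℤ) (a0 b0 : Fin n)
    (hab : (b0:ℕ) = (a0:ℕ)+1) (hL1 : lam' a0 = lam b0) (hL2 : lam' b0 = lam a0)
    (hL3 : ∀ a, a ≠ a0 → a ≠ b0 → lam' a = lam a)
    (hsa : 0 ≤ lam a0) (hsb : lam b0 < 0) :
    quotOf b lam' = quotOf b lam := by
  have hav := a0.isLt; have hbv := b0.isLt
  have hane : a0 ≠ b0 := fun h => by rw [h] at hab; omega
  have hbne : b0 ≠ a0 := fun h => hane h.symm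
  have hcast : ((b0:ℕ):ℤ) = ((a0:ℕ):ℤ) + 1 := by rw [hab]; push_cast; ring
  have ea : (if a0 = a0 then (-1:ℤ) else if a0 = b0 then (-1:ℤ) else 0) = -1 := by simp
  have eb : (if b0 = a0 then (-1:ℤ) else if b0 = b0 then (-1:ℤ) else 0) = -1 := by simp [hbne]
  have eo : ∀ z : Fin n, z ≠ a0 → z ≠ b0 →
      (if z = a0 then (-1:ℤ) else if z = b0 then (-1:ℤ) else 0) = 0 := by
    intro z h1 h2; simp [h1, h2]
  have hkey : ∀ a, key n lam' a = key n lam ((Equiv.swap a0 b0) a)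
      + (fun x => if x = a0 then (-1:ℤ) else if x = b0 then (-1:ℤ) else 0)
        ((Equiv.swap a0 b0) a) := by
    intro a
    by_cases ha : a = a0
    · rw [ha, Equiv.swap_apply_left]
      show key n lam' a0 = key n lam b0 + (if b0 = a0 then (-1:ℤ) else if b0 = b0 then (-1:ℤ) else 0)
      rw [eb]
      unfold key ckey
      rw [hL1, if_neg (not_le.mpr hsb), if_neg (not_le.mpr hsb), hcast]
      ring
    · by_cases hb' : a = b0
      · rw [hb', Equiv.swap_apply_right]
        show key n lam' b0 = key n lam a0 + (if a0 = a0 then (-1:ℤ) else if a0 = b0 then (-1:ℤ) else 0)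
        rw [ea]
        unfold key ckey
        rw [hL2, if_pos hsa, if_pos hsa, hcast]
        ring
      · rw [Equiv.swap_apply_of_ne_of_ne ha hb']
        show key n lam' a = key n lam a + (if a = a0 then (-1:ℤ) else if a = b0 then (-1:ℤ) else 0)
        rw [eo a ha hb']
        unfold key ckey
        rw [hL3 a ha hb']
        ring
  have hmono' : ∀ x y, key n lam x < key n lam y →
      key n lam x + (if x = a0 then (-1:ℤ) else if x = b0 then (-1:ℤ) else 0)
        < key n lam y + (if y = a0 then (-1:ℤ) else if y = b0 then (-1:ℤ) else 0) := by
    intro x y h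
    by_cases hx1 : x = a0
    · rw [hx1] at h ⊢
      rw [ea]
      by_cases hy1 : y = a0
      · rw [hy1] at h; omega
      · by_cases hy2 : y = b0
        · rw [hy2] at h ⊢; rw [eb]; omega
        · rw [eo y hy1 hy2]; omega
    · by_cases hx2 : x = b0
      · rw [hx2] at h ⊢
        rw [eb]
        by_cases hy1 : y = a0
        · rw [hy1] at h ⊢; rw [ea]; omega
        · by_cases hy2 : y = b0
          · rw [hy2] at h; omega
          · rw [eo y hy1 hy2]; omega
      · rw [eo x hx1 hx2]
        by_cases hy1 : y = a0
        · rw [hy1] at h ⊢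
          rw [ea]
          have hex : key n lam a0 ≠ key n lam x + 1 := by
            intro hc
            have hcl := key_close hn lam (e := 1) (by omega) hc
            rw [ckey_pos hsa] at hcl
            obtain ⟨he, _⟩ := ckey_pin_pos lam (t := b0) (x := x) (by rw [hcast]; omega)
            exact hx2 he
          omega
        · by_cases hy2 : y = b0
          · rw [hy2] at h ⊢
            rw [eb]
            have hex : key n lam b0 ≠ key n lam x + 1 := by
              intro hc
              have hcl := key_close hn lam (e := 1) (by omega) hc
              rw [ckey_negv hsb] at hcl
              obtain ⟨he, _⟩ := ckey_pin_neg lam (t := a0) (x := x) (by omega)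
              exact hx1 he
            omega
          · rw [eo y hy1 hy2]; omega
  have hrk := rank_transport lam lam' (Equiv.swap a0 b0)
    (fun a c h => by rw [hkey a, hkey c]; exact hmono' _ _ h)
  have hrka := rk_lt lam a0
  have hrkb := rk_lt lam b0
  have hqne : rk n lam a0 ≠ rk n lam b0 := fun hc => hane (rk_inj lam hc)
  have hCCq0 : CC n lam (rk n lam a0 + 1) = 2*(n:ℤ) - ((a0:ℕ):ℤ) := by
    rw [CC_eq_ckey' lam (i := a0) (by omega) (by omega) (by omega), ckey_pos hsa]
  have hCCq1 : CC n lam (rk n lam b0 + 1) = ((b0:ℕ):ℤ) := by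
    rw [CC_eq_ckey' lam (i := b0) (by omega) (by omega) (by omega), ckey_negv hsb]
  apply quot_eq_of_pAt
  intro m h1 h2
  rw [pAt_shift hn hb lam lam' (Equiv.swap a0 b0)
    (fun x => if x = a0 then (-1:ℤ) else if x = b0 then (-1:ℤ) else 0) hkey hrk h1 h2,
    Dl_double lam a0 b0 (-1) (-1) hane (by omega) (by omega),
    Dl_double lam a0 b0 (-1) (-1) hane (by omega : 1 ≤ m+1) (by omega)]
  by_cases h10 : m = rk n lam a0 + 1
  · by_cases h11 : m + 1 = rk n lam b0 + 1
    · rw [if_pos h10, if_neg (by omega : ¬ m + 1 = rk n lam a0 + 1), if_pos h11,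
        show (-1:ℤ) - (-1) = 0 by norm_num]
      refine pAt_eq_of_nocross hn hb lam h1 h2 (by omega) (fun j hj => ?_)
      omega
    · rw [if_pos h10, if_neg (by omega : ¬ m + 1 = rk n lam a0 + 1), if_neg h11,
        show (-1:ℤ) - 0 = -1 by norm_num]
      refine pAt_eq_of_nocross hn hb lam h1 h2 (by omega) (fun j hj => ?_)
      have hj0 : j = 0 := by omega
      subst hj0
      intro hcon
      rw [← h10] at hCCq0
      rw [hCCq0] at hcon
      obtain ⟨he, _⟩ := CC_pin_pos lam (m := m+1) (by omega) (by omega) (t := b0)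
        (by rw [hcast]; omega)
      exact h11 (by omega)
  · by_cases h20 : m = rk n lam b0 + 1
    · by_cases h21 : m + 1 = rk n lam a0 + 1
      · rw [if_neg h10, if_pos h20, if_pos h21, show (-1:ℤ) - (-1) = 0 by norm_num]
        refine pAt_eq_of_nocross hn hb lam h1 h2 (by omega) (fun j hj => ?_)
        omega
      · rw [if_neg h10, if_pos h20, if_neg h21, if_neg (by omega : ¬ m + 1 = rk n lam b0 + 1),
          show (-1:ℤ) - 0 = -1 by norm_num]
        refine pAt_eq_of_nocross hn hb lam h1 h2 (by omega) (fun j hj => ?_)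
        have hj0 : j = 0 := by omega
        subst hj0
        intro hcon
        rw [← h20] at hCCq1
        rw [hCCq1] at hcon
        obtain ⟨he, _⟩ := CC_pin_neg lam (m := m+1) (by omega) (by omega) (t := a0)
          (by rw [hcast] at hcon; omega) hn
        exact h21 (by omega)
    · by_cases h30 : m + 1 = rk n lam a0 + 1
      · rw [if_neg h10, if_neg h20, if_pos h30, show (0:ℤ) - (-1) = 1 by norm_num]
        refine pAt_eq_of_nocross hn hb lam h1 h2 (by omega) (fun j hj => ?_)
        have hj0 : j = 1 := by omega
        subst hj0
        intro hcon
        exact CC_inj lam (m := m) (m' := m+1) (by omega) (by omega) (by omega) (by omega)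
          (by omega) (by omega)
      · by_cases h40 : m + 1 = rk n lam b0 + 1
        · rw [if_neg h10, if_neg h20, if_neg h30, if_pos h40,
            show (0:ℤ) - (-1) = 1 by norm_num]
          refine pAt_eq_of_nocross hn hb lam h1 h2 (by omega) (fun j hj => ?_)
          have hj0 : j = 1 := by omega
          subst hj0
          intro hcon
          exact CC_inj lam (m := m) (m' := m+1) (by omega) (by omega) (by omega) (by omega)
            (by omega) (by omega)
        · rw [if_neg h10, if_neg h20, if_neg h30, if_neg h40,
            show (0:ℤ) - 0 = 0 by norm_num]
          refine pAt_eq_of_nocross hn hb lam h1 h2 (by omega) (fun j hj => ?_)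
          omega

lemma case_swap_np (hn : 2 ≤ n) {b : ℤ} (hb : 1 ≤ b) (lam lam' : Fin n → ℤ) (a0 b0 : Fin n)
    (hab : (b0:ℕ) = (a0:ℕ)+1) (hL1 : lam' a0 = lam b0) (hL2 : lam' b0 = lam a0)
    (hL3 : ∀ a, a ≠ a0 → a ≠ b0 → lam' a = lam a)
    (hsa : lam a0 < 0) (hsb : 0 ≤ lam b0) :
    quotOf b lam' = quotOf b lam := by
  have hav := a0.isLt; have hbv := b0.isLt
  have hane : a0 ≠ b0 := fun h => by rw [h] at hab; omega
  have hbne : b0 ≠ a0 := fun h => hane h.symm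
  have hcast : ((b0:ℕ):ℤ) = ((a0:ℕ):ℤ) + 1 := by rw [hab]; push_cast; ring
  have ea : (if a0 = a0 then (1:ℤ) else if a0 = b0 then (1:ℤ) else 0) = 1 := by simp
  have eb : (if b0 = a0 then (1:ℤ) else if b0 = b0 then (1:ℤ) else 0) = 1 := by simp [hbne]
  have eo : ∀ z : Fin n, z ≠ a0 → z ≠ b0 →
      (if z = a0 then (1:ℤ) else if z = b0 then (1:ℤ) else 0) = 0 := by
    intro z h1 h2; simp [h1, h2]
  have hkey : ∀ a, key n lam' a = key n lam ((Equiv.swap a0 b0) a)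
      + (fun x => if x = a0 then (1:ℤ) else if x = b0 then (1:ℤ) else 0)
        ((Equiv.swap a0 b0) a) := by
    intro a
    by_cases ha : a = a0
    · rw [ha, Equiv.swap_apply_left]
      show key n lam' a0 = key n lam b0 + (if b0 = a0 then (1:ℤ) else if b0 = b0 then (1:ℤ) else 0)
      rw [eb]
      unfold key ckey
      rw [hL1, if_pos hsb, if_pos hsb, hcast]
      ring
    · by_cases hb' : a = b0
      · rw [hb', Equiv.swap_apply_right]
        show key n lam' b0 = key n lam a0 + (if a0 = a0 then (1:ℤ) else if a0 = b0 then (1:ℤ) else 0)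
        rw [ea]
        unfold key ckey
        rw [hL2, if_neg (not_le.mpr hsa), if_neg (not_le.mpr hsa), hcast]
        ring
      · rw [Equiv.swap_apply_of_ne_of_ne ha hb']
        show key n lam' a = key n lam a + (if a = a0 then (1:ℤ) else if a = b0 then (1:ℤ) else 0)
        rw [eo a ha hb']
        unfold key ckey
        rw [hL3 a ha hb']
        ring
  have hmono' : ∀ x y, key n lam x < key n lam y →
      key n lam x + (if x = a0 then (1:ℤ) else if x = b0 then (1:ℤ) else 0)
        < key n lam y + (if y = a0 then (1:ℤ) else if y = b0 then (1:ℤ) else 0) := by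
    intro x y h
    by_cases hx1 : x = a0
    · rw [hx1] at h ⊢
      rw [ea]
      by_cases hy1 : y = a0
      · rw [hy1] at h; omega
      · by_cases hy2 : y = b0
        · rw [hy2] at h ⊢; rw [eb]; omega
        · rw [eo y hy1 hy2]
          have hex : key n lam y ≠ key n lam a0 + 1 := by
            intro hc
            have hcl := key_close hn lam (e := 1) (by omega) hc
            rw [ckey_negv hsa] at hcl
            obtain ⟨he, _⟩ := ckey_pin_neg lam (t := b0) (x := y) (by rw [hcl, hcast])
            exact hy2 he
          omega
    · by_cases hx2 : x = b0
      · rw [hx2] at h ⊢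
        rw [eb]
        by_cases hy1 : y = a0
        · rw [hy1] at h ⊢; rw [ea]; omega
        · by_cases hy2 : y = b0
          · rw [hy2] at h; omega
          · rw [eo y hy1 hy2]
            have hex : key n lam y ≠ key n lam b0 + 1 := by
              intro hc
              have hcl := key_close hn lam (e := 1) (by omega) hc
              rw [ckey_pos hsb, hcast] at hcl
              obtain ⟨he, _⟩ := ckey_pin_pos lam (t := a0) (x := y) (by rw [hcl]; ring)
              exact hy1 he
            omega
      · rw [eo x hx1 hx2]
        by_cases hy1 : y = a0
        · rw [hy1] at h ⊢; rw [ea]; omega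
        · by_cases hy2 : y = b0
          · rw [hy2] at h ⊢; rw [eb]; omega
          · rw [eo y hy1 hy2]; omega
  have hrk := rank_transport lam lam' (Equiv.swap a0 b0)
    (fun a c h => by rw [hkey a, hkey c]; exact hmono' _ _ h)
  have hrka := rk_lt lam a0
  have hrkb := rk_lt lam b0
  have hqne : rk n lam a0 ≠ rk n lam b0 := fun hc => hane (rk_inj lam hc)
  have hCCq0 : CC n lam (rk n lam a0 + 1) = ((a0:ℕ):ℤ) := by
    rw [CC_eq_ckey' lam (i := a0) (by omega) (by omega) (by omega), ckey_negv hsa]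
  have hCCq1 : CC n lam (rk n lam b0 + 1) = 2*(n:ℤ) - ((b0:ℕ):ℤ) := by
    rw [CC_eq_ckey' lam (i := b0) (by omega) (by omega) (by omega), ckey_pos hsb]
  apply quot_eq_of_pAt
  intro m h1 h2
  rw [pAt_shift hn hb lam lam' (Equiv.swap a0 b0)
    (fun x => if x = a0 then (1:ℤ) else if x = b0 then (1:ℤ) else 0) hkey hrk h1 h2,
    Dl_double lam a0 b0 1 1 hane (by omega) (by omega),
    Dl_double lam a0 b0 1 1 hane (by omega : 1 ≤ m+1) (by omega)]
  by_cases h10 : m = rk n lam a0 + 1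
  · by_cases h11 : m + 1 = rk n lam b0 + 1
    · rw [if_pos h10, if_neg (by omega : ¬ m + 1 = rk n lam a0 + 1), if_pos h11,
        show (1:ℤ) - 1 = 0 by norm_num]
      refine pAt_eq_of_nocross hn hb lam h1 h2 (by omega) (fun j hj => ?_)
      omega
    · rw [if_pos h10, if_neg (by omega : ¬ m + 1 = rk n lam a0 + 1), if_neg h11,
        show (1:ℤ) - 0 = 1 by norm_num]
      refine pAt_eq_of_nocross hn hb lam h1 h2 (by omega) (fun j hj => ?_)
      have hj0 : j = 1 := by omega
      subst hj0
      intro hcon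
      exact CC_inj lam (m := m) (m' := m+1) (by omega) (by omega) (by omega) (by omega)
        (by omega) (by omega)
  · by_cases h20 : m = rk n lam b0 + 1
    · by_cases h21 : m + 1 = rk n lam a0 + 1
      · rw [if_neg h10, if_pos h20, if_pos h21, show (1:ℤ) - 1 = 0 by norm_num]
        refine pAt_eq_of_nocross hn hb lam h1 h2 (by omega) (fun j hj => ?_)
        omega
      · rw [if_neg h10, if_pos h20, if_neg h21, if_neg (by omega : ¬ m + 1 = rk n lam b0 + 1),
          show (1:ℤ) - 0 = 1 by norm_num]
        refine pAt_eq_of_nocross hn hb lam h1 h2 (by omega) (fun j hj => ?_)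
        have hj0 : j = 1 := by omega
        subst hj0
        intro hcon
        exact CC_inj lam (m := m) (m' := m+1) (by omega) (by omega) (by omega) (by omega)
          (by omega) (by omega)
    · by_cases h30 : m + 1 = rk n lam a0 + 1
      · rw [if_neg h10, if_neg h20, if_pos h30, show (0:ℤ) - 1 = -1 by norm_num]
        refine pAt_eq_of_nocross hn hb lam h1 h2 (by omega) (fun j hj => ?_)
        have hj0 : j = 0 := by omega
        subst hj0
        intro hcon
        rw [← h30] at hCCq0
        rw [hCCq0] at hcon
        obtain ⟨he, _⟩ := CC_pin_neg lam (m := m) (by omega) (by omega) (t := b0)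
          (by rw [hcast]; omega) hn
        exact h20 he
      · by_cases h40 : m + 1 = rk n lam b0 + 1
        · rw [if_neg h10, if_neg h20, if_neg h30, if_pos h40,
            show (0:ℤ) - 1 = -1 by norm_num]
          refine pAt_eq_of_nocross hn hb lam h1 h2 (by omega) (fun j hj => ?_)
          have hj0 : j = 0 := by omega
          subst hj0
          intro hcon
          rw [← h40] at hCCq1
          rw [hCCq1] at hcon
          obtain ⟨he, _⟩ := CC_pin_pos lam (m := m) (by omega) (by omega) (t := a0)
            (by rw [hcast] at hcon; omega)
          exact h10 he
        · rw [if_neg h10, if_neg h20, if_neg h30, if_neg h40,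
            show (0:ℤ) - 0 = 0 by norm_num]
          refine pAt_eq_of_nocross hn hb lam h1 h2 (by omega) (fun j hj => ?_)
          omega

theorem stmt14' (n : ℕ) (hn : 2 ≤ n) (r : ℤ) (hr : 1 ≤ r - 1)
    (lam : Fin n → ℤ) (i : ℕ) (hi : i ≤ n) (hne : dotAct i lam ≠ lam) :
    (quotOf (r - 1) (dotAct i lam) = quotOf (r - 1) lam ∨
      ∃ j : Fin n,
        quotOf (r - 1) (dotAct i lam) = quotOf (r - 1) lam + varpi j ∨
        quotOf (r - 1) (dotAct i lam) = quotOf (r - 1) lam - varpi j) ∧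
    (i = 0 → quotOf (r - 1) (dotAct i lam) = quotOf (r - 1) lam) := by
  by_cases hi0 : i = 0
  · subst hi0
    have heq := case_zero hn hr lam
    exact ⟨Or.inl heq, fun _ => heq⟩
  · refine ⟨?_, fun hc => absurd hc hi0⟩
    by_cases hin : i = n
    · rw [hin] at hne ⊢
      have h0 : lam ⟨n-1, by omega⟩ ≠ 0 := by
        intro h0
        apply hne
        funext a
        have hav := a.isLt
        show dotAct n lam a = lam a
        simp only [dotAct]
        rw [if_neg (by omega : ¬ n = 0), if_pos trivial]
        by_cases hc : (a:ℕ) + 1 = n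
        · rw [if_pos hc]
          have : a = (⟨n-1, by omega⟩ : Fin n) := Fin.ext (by simp; omega)
          rw [this, h0]
          ring
        · rw [if_neg hc]
      exact case_n hn hr lam h0
    · have hii : 1 ≤ i ∧ i ≤ n - 1 := by omega
      set a0 : Fin n := ⟨i-1, by omega⟩ with ha0
      set b0 : Fin n := ⟨i, by omega⟩ with hb0
      have hab : (b0:ℕ) = (a0:ℕ) + 1 := by simp [ha0, hb0]; omega
      have hL1 : dotAct i lam a0 = lam b0 := by
        simp only [dotAct]
        rw [if_neg hi0, if_neg hin, dif_pos ⟨show i - 1 + 1 = i by omega, by omega⟩]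
        congr 1
        apply Fin.ext
        show i - 1 + 1 = (b0 : ℕ)
        simp [hb0]
        omega
      have hL2 : dotAct i lam b0 = lam a0 := by
        simp only [dotAct]
        rw [if_neg hi0, if_neg hin,
          dif_neg (by push_neg; intro hc; exfalso; revert hc; show ¬ (i + 1 = i); omega)]
        rw [dif_pos rfl]
      have hL3 : ∀ a : Fin n, a ≠ a0 → a ≠ b0 → dotAct i lam a = lam a := by
        intro a haa hbb
        have h1 : (a:ℕ) + 1 ≠ i := fun hc => haa (Fin.ext (by show (a:ℕ) = i - 1; omega))
        have h2 : (a:ℕ) ≠ i := fun hc => hbb (Fin.ext hc)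
        simp only [dotAct]
        rw [if_neg hi0, if_neg hin, dif_neg (by push_neg; intro hc; exact absurd hc h1),
          dif_neg h2]
      have hvne : lam a0 ≠ lam b0 := by
        intro hc
        apply hne
        funext a
        by_cases haa : a = a0
        · rw [haa, hL1, ← hc]
        · by_cases hbb : a = b0
          · rw [hbb, hL2]; exact hc
          · exact hL3 a haa hbb
      rcases le_or_gt 0 (lam a0) with hsa | hsa <;> rcases le_or_gt 0 (lam b0) with hsb | hsb
      · exact case_swap_pp hn hr lam _ a0 b0 hab hL1 hL2 hL3 hsa hsb hvne
      · exact Or.inl (case_swap_pm hn hr lam _ a0 b0 hab hL1 hL2 hL3 hsa hsb)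
      · exact Or.inl (case_swap_np hn hr lam _ a0 b0 hab hL1 hL2 hL3 hsa hsb)
      · exact case_swap_mm hn hr lam _ a0 b0 hab hL1 hL2 hL3 hsa hsb hvne


/-- for s_i·λ ≠ λ, the (r−1)-quotient of s_i·λ equals λ^{quot}, or
λ^{quot} ± ϖ_j for some j; for i = 0 it is always unchanged. -/
theorem stmt14 (n : ℕ) (hn : 2 ≤ n) (r : ℤ) (hr : 1 ≤ r - 1)
    (lam : Fin n → ℤ) (i : ℕ) (hi : i ≤ n) (hne : dotAct i lam ≠ lam) :
    (quotOf (r - 1) (dotAct i lam) = quotOf (r - 1) lam ∨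
      ∃ j : Fin n,
        quotOf (r - 1) (dotAct i lam) = quotOf (r - 1) lam + varpi j ∨
        quotOf (r - 1) (dotAct i lam) = quotOf (r - 1) lam - varpi j) ∧
    (i = 0 → quotOf (r - 1) (dotAct i lam) = quotOf (r - 1) lam) :=
  stmt14' n hn r hr lam i hi hne

end CCnDAHA
end

section
/- Let n ≥ 2. For every λ ∈ ℤ^n there exist an integer ℓ ≥ 0 and indices j_1, …, j_ℓ ∈ {0, 1, …, n} such that, setting λ^{(0)} = (0, …, 0) and λ^{(m)} = s_{j_m}·λ^{(m−1)} for 1 ≤ m ≤ ℓ, one has λ^{(ℓ)} = λ and ⟨λ^{(m)}, α_{j_m}⟩ > 0 for every 1 ≤ m ≤ ℓ. -/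
open scoped Classical

namespace CCnDAHA

variable {n : ℕ}




/-! ### Auxiliary machinery for stmt17 -/

/-- sum of absolute values. -/
def Sm (lam : Fin n → ℤ) : ℕ := ∑ i, (lam i).natAbs

/-- number of positive entries. -/
def Pc (lam : Fin n → ℤ) : ℕ := ∑ i, if 0 < lam i then 1 else 0

/-- number of inversions. -/
noncomputable def Iv (lam : Fin n → ℤ) : ℕ :=
  ((Finset.univ : Finset (Fin n × Fin n)).filter
    (fun p => p.1 < p.2 ∧ lam p.2 < lam p.1)).card

/-- combined measure. -/
noncomputable def Msr (lam : Fin n → ℤ) : ℕ :=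
  Sm lam * (2 * (n * n) + 2) + Pc lam * (n * n + 1) + Iv lam

lemma Iv_le (lam : Fin n → ℤ) : Iv lam ≤ n * n := by
  have h := Finset.card_filter_le (Finset.univ : Finset (Fin n × Fin n))
    (fun p => p.1 < p.2 ∧ lam p.2 < lam p.1)
  unfold Iv
  exact h.trans (by simp)

/-- the chain property, as in the statement. -/
noncomputable def ChainP (lam : Fin n → ℤ) : Prop :=
  ∃ (L : ℕ) (js : ℕ → ℕ) (seq : ℕ → (Fin n → ℤ)),
      (∀ ℓ, ℓ < L → js ℓ ≤ n) ∧
      seq 0 = (fun _ => 0) ∧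
      (∀ ℓ, ℓ < L → seq (ℓ + 1) = dotAct (js ℓ) (seq ℓ)) ∧
      seq L = lam ∧
      (∀ ℓ, ℓ < L → 0 < pairing (js ℓ) (seq (ℓ + 1)))

lemma ChainP_zero : ChainP (fun _ => (0:ℤ) : Fin n → ℤ) :=
  ⟨0, fun _ => 0, fun _ => (fun _ => 0),
    fun _ h => absurd h (Nat.not_lt_zero _), rfl,
    fun _ h => absurd h (Nat.not_lt_zero _), rfl,
    fun _ h => absurd h (Nat.not_lt_zero _)⟩

lemma ChainP_extend {lam : Fin n → ℤ} {j : ℕ} (hj : j ≤ n)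
    (hp : 0 < pairing j lam) (hinv : dotAct j (dotAct j lam) = lam)
    (h : ChainP (dotAct j lam)) : ChainP lam := by
  obtain ⟨L, js, seq, h1, h2, h3, h4, h5⟩ := h
  refine ⟨L + 1, Function.update js L j, Function.update seq (L + 1) lam,
    ?_, ?_, ?_, ?_, ?_⟩
  · intro ℓ hℓ
    by_cases hL : ℓ = L
    · rw [hL, Function.update_self]; exact hj
    · rw [Function.update_of_ne hL]; exact h1 ℓ (by omega)
  · rw [Function.update_of_ne (by omega : (0:ℕ) ≠ L + 1)]; exact h2
  · intro ℓ hℓ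
    by_cases hL : ℓ = L
    · subst hL
      rw [Function.update_self, Function.update_self,
        Function.update_of_ne (by omega : ℓ ≠ ℓ + 1), h4]
      exact hinv.symm
    · rw [Function.update_of_ne (by omega : ℓ + 1 ≠ L + 1),
        Function.update_of_ne hL,
        Function.update_of_ne (by omega : ℓ ≠ L + 1)]
      exact h3 ℓ (by omega)
  · rw [Function.update_self]
  · intro ℓ hℓ
    by_cases hL : ℓ = L
    · subst hL
      rw [Function.update_self, Function.update_self]
      exact hp
    · rw [Function.update_of_ne hL,
        Function.update_of_ne (by omega : ℓ + 1 ≠ L + 1)]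
      exact h5 ℓ (by omega)

lemma dotAct_zero (lam : Fin n → ℤ) :
    dotAct 0 lam = fun j : Fin n => if (j : ℕ) = 0 then -1 - lam j else lam j := by
  funext j; simp [dotAct]

lemma dotAct_top (hn0 : n ≠ 0) (lam : Fin n → ℤ) :
    dotAct n lam = fun j : Fin n => if (j : ℕ) + 1 = n then -lam j else lam j := by
  funext j; simp [dotAct, hn0]

lemma dotAct_mid (k : Fin n) (hk : (k : ℕ) + 1 < n) (lam : Fin n → ℤ) :
    dotAct ((k : ℕ) + 1) lam = lam ∘ Equiv.swap k ⟨(k : ℕ) + 1, hk⟩ := by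
  funext j
  have hzero : ¬ ((k : ℕ) + 1 = 0) := by omega
  have hn' : ¬ ((k : ℕ) + 1 = n) := by omega
  simp only [dotAct, if_neg hzero, if_neg hn', Function.comp_apply,
    Equiv.swap_apply_def]
  split_ifs <;>
    first
      | rfl
      | (exfalso; simp_all [Fin.ext_iff]; omega)
      | (congr 1; apply Fin.ext; simp only [Fin.ext_iff] at *; omega)

lemma dotAct_zero_invol (lam : Fin n → ℤ) : dotAct 0 (dotAct 0 lam) = lam := by
  funext j
  simp only [dotAct_zero]
  by_cases h : (j : ℕ) = 0 <;> simp [h]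

lemma dotAct_top_invol (hn0 : n ≠ 0) (lam : Fin n → ℤ) :
    dotAct n (dotAct n lam) = lam := by
  funext j
  simp only [dotAct_top hn0]
  by_cases h : (j : ℕ) + 1 = n <;> simp [h]

lemma dotAct_mid_invol (k : Fin n) (hk : (k : ℕ) + 1 < n) (lam : Fin n → ℤ) :
    dotAct ((k : ℕ) + 1) (dotAct ((k : ℕ) + 1) lam) = lam := by
  rw [dotAct_mid k hk, dotAct_mid k hk]
  funext j
  simp [Equiv.swap_apply_self]

lemma pairing_zero (hpos : 0 < n) (lam : Fin n → ℤ) :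
    pairing 0 lam = -2 * lam ⟨0, hpos⟩ := by
  have h0 : n ≠ 0 := by omega
  simp [pairing, h0]

lemma pairing_top (hn0 : n ≠ 0) (h1 : n - 1 < n) (lam : Fin n → ℤ) :
    pairing n lam = 2 * lam ⟨n - 1, h1⟩ := by
  simp [pairing, hn0]

lemma pairing_mid (k : Fin n) (hk : (k : ℕ) + 1 < n) (lam : Fin n → ℤ) :
    pairing ((k : ℕ) + 1) lam = lam k - lam ⟨(k : ℕ) + 1, hk⟩ := by
  have h0 : n ≠ 0 := by omega
  have e1 : ((k : ℕ) + 1 - 1) % n = (k : ℕ) := by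
    rw [Nat.add_sub_cancel]; exact Nat.mod_eq_of_lt k.isLt
  have e2 : ((k : ℕ) + 1) % n = (k : ℕ) + 1 := Nat.mod_eq_of_lt hk
  simp only [pairing, dif_neg h0, if_neg (by omega : ¬ ((k : ℕ) + 1 = 0)),
    if_neg (by omega : ¬ ((k : ℕ) + 1 = n))]
  congr 1
  · congr 1; exact Fin.ext (by simp [e1, Nat.mod_eq_of_lt k.isLt])
  · congr 1; exact Fin.ext (by simp [e2])

lemma sum_split (f : Fin n → ℕ) (i0 : Fin n) :
    ∑ i, f i = f i0 + ∑ i ∈ Finset.univ.erase i0, f i :=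
  (Finset.add_sum_erase _ f (Finset.mem_univ i0)).symm

lemma Sm_comp_swap (e : Equiv.Perm (Fin n)) (lam : Fin n → ℤ) :
    Sm (lam ∘ e) = Sm lam := by
  unfold Sm
  exact Equiv.sum_comp e (fun i => (lam i).natAbs)

lemma Pc_comp_swap (e : Equiv.Perm (Fin n)) (lam : Fin n → ℤ) :
    Pc (lam ∘ e) = Pc lam := by
  unfold Pc
  exact Equiv.sum_comp e (fun i => if 0 < lam i then 1 else 0)

lemma Iv_swap (k : Fin n) (hk : (k : ℕ) + 1 < n) (lam : Fin n → ℤ)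
    (h : lam ⟨(k : ℕ) + 1, hk⟩ < lam k) :
    Iv (lam ∘ Equiv.swap k ⟨(k : ℕ) + 1, hk⟩) + 1 = Iv lam := by
  set k' : Fin n := ⟨(k : ℕ) + 1, hk⟩ with hk'def
  set s := Equiv.swap k k' with hsdef
  have hkk' : k ≠ k' := by
    intro hc; have := congrArg Fin.val hc; simp [hk'def] at this
  have hss : ∀ a, s (s a) = a := fun a => Equiv.swap_apply_self _ _ a
  have hne : ∀ a b : Fin n, lam b < lam a → (a, b) ≠ (k', k) := by
    intro a b hab hc
    simp only [Prod.mk.injEq] at hc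
    rw [hc.1, hc.2] at hab
    exact absurd hab (not_lt.mpr h.le)
  have key0 : ∀ a b : Fin n, (a, b) ≠ (k', k) →
      (s a < s b ↔ ((a, b) ≠ (k, k') ∧ a < b)) := by
    intro a b hab
    have hk'v : (k' : ℕ) = (k : ℕ) + 1 := rfl
    simp only [hsdef, Equiv.swap_apply_def, Fin.lt_def, ne_eq, Prod.ext_iff,
      Fin.ext_iff, apply_ite Fin.val, hk'v, not_and] at hab ⊢
    split_ifs <;> omega
  have key : ∀ a b : Fin n, lam b < lam a →
      (s a < s b ↔ ((a, b) ≠ (k, k') ∧ a < b)) :=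
    fun a b hab => key0 a b (hne a b hab)
  have himg : (Finset.univ.filter (fun p : Fin n × Fin n =>
        p.1 < p.2 ∧ (lam ∘ s) p.2 < (lam ∘ s) p.1)).image
        (fun p : Fin n × Fin n => (s p.1, s p.2))
      = (Finset.univ.filter (fun p : Fin n × Fin n =>
        p.1 < p.2 ∧ lam p.2 < lam p.1)).erase (k, k') := by
    ext q
    simp only [Finset.mem_image, Finset.mem_filter, Finset.mem_erase,
      Finset.mem_univ, true_and, Function.comp_apply]
    constructor
    · rintro ⟨p, ⟨hp1, hp2⟩, rfl⟩
      have hkey := key (s p.1) (s p.2) hp2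
      rw [hss, hss] at hkey
      have := hkey.mp hp1
      exact ⟨this.1, this.2, hp2⟩
    · rintro ⟨hq0, hq1, hq2⟩
      refine ⟨(s q.1, s q.2), ⟨?_, ?_⟩, ?_⟩
      · exact (key q.1 q.2 hq2).mpr ⟨hq0, hq1⟩
      · simpa [hss] using hq2
      · simp [hss]
  have hmem : (k, k') ∈ (Finset.univ.filter (fun p : Fin n × Fin n =>
      p.1 < p.2 ∧ lam p.2 < lam p.1)) := by
    simp only [Finset.mem_filter, Finset.mem_univ, true_and]
    exact ⟨by simp [Fin.lt_def, hk'def], h⟩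
  have hinj : Function.Injective (fun p : Fin n × Fin n => (s p.1, s p.2)) := by
    intro p q hpq
    simp only [Prod.ext_iff] at hpq ⊢
    exact ⟨s.injective hpq.1, s.injective hpq.2⟩
  have hcard := Finset.card_image_of_injective
    (Finset.univ.filter (fun p : Fin n × Fin n =>
      p.1 < p.2 ∧ (lam ∘ s) p.2 < (lam ∘ s) p.1)) hinj
  rw [himg, Finset.card_erase_of_mem hmem] at hcard
  have hpos : 0 < (Finset.univ.filter (fun p : Fin n × Fin n =>
      p.1 < p.2 ∧ lam p.2 < lam p.1)).card := Finset.card_pos.mpr ⟨_, hmem⟩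
  unfold Iv
  omega

lemma stats_zero (hpos : 0 < n) (lam : Fin n → ℤ) (h : lam ⟨0, hpos⟩ < 0) :
    Sm (dotAct 0 lam) + 1 = Sm lam ∧ Pc (dotAct 0 lam) ≤ Pc lam + 1 := by
  set i0 : Fin n := ⟨0, hpos⟩ with hi0
  have hpt : ∀ j : Fin n, dotAct 0 lam j
      = if (j : ℕ) = 0 then -1 - lam j else lam j := by
    intro j; rw [dotAct_zero]
  have hne : ∀ i ∈ Finset.univ.erase i0, dotAct 0 lam i = lam i := by
    intro i hi
    have hi' : i ≠ i0 := (Finset.mem_erase.mp hi).1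
    have : (i : ℕ) ≠ 0 := by
      intro hc; exact hi' (Fin.ext (by simp [hi0, hc]))
    rw [hpt, if_neg this]
  have hv : dotAct 0 lam i0 = -1 - lam i0 := by rw [hpt, if_pos rfl]
  constructor
  · rw [Sm, Sm, sum_split (fun i => ((dotAct 0 lam) i).natAbs) i0,
      sum_split (fun i => (lam i).natAbs) i0]
    rw [Finset.sum_congr rfl (fun i hi => by rw [hne i hi]), hv]
    omega
  · rw [Pc, Pc, sum_split (fun i => if 0 < (dotAct 0 lam) i then 1 else 0) i0,
      sum_split (fun i => if 0 < lam i then 1 else 0) i0]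
    rw [Finset.sum_congr rfl (fun i hi => by rw [hne i hi]), hv]
    split_ifs <;> omega

lemma stats_top (hn0 : n ≠ 0) (h1 : n - 1 < n) (lam : Fin n → ℤ)
    (h : 0 < lam ⟨n - 1, h1⟩) :
    Sm (dotAct n lam) = Sm lam ∧ Pc (dotAct n lam) + 1 = Pc lam := by
  set iN : Fin n := ⟨n - 1, h1⟩ with hiN
  have hpt : ∀ j : Fin n, dotAct n lam j
      = if (j : ℕ) + 1 = n then -lam j else lam j := by
    intro j; rw [dotAct_top hn0]
  have hne : ∀ i ∈ Finset.univ.erase iN, dotAct n lam i = lam i := by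
    intro i hi
    have hi' : i ≠ iN := (Finset.mem_erase.mp hi).1
    have : (i : ℕ) + 1 ≠ n := by
      intro hc; exact hi' (Fin.ext (by simp [hiN]; omega))
    rw [hpt, if_neg this]
  have hv : dotAct n lam iN = -lam iN := by
    rw [hpt, if_pos (by simp [hiN]; omega)]
  constructor
  · rw [Sm, Sm, sum_split (fun i => ((dotAct n lam) i).natAbs) iN,
      sum_split (fun i => (lam i).natAbs) iN]
    rw [Finset.sum_congr rfl (fun i hi => by rw [hne i hi]), hv]
    omega
  · rw [Pc, Pc, sum_split (fun i => if 0 < (dotAct n lam) i then 1 else 0) iN,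
      sum_split (fun i => if 0 < lam i then 1 else 0) iN]
    rw [Finset.sum_congr rfl (fun i hi => by rw [hne i hi]), hv]
    split_ifs <;> omega

lemma mono_of_adj (lam : Fin n → ℤ)
    (h : ∀ (k : Fin n) (hk : (k : ℕ) + 1 < n), lam k ≤ lam ⟨(k : ℕ) + 1, hk⟩) :
    ∀ (a b : Fin n), (a : ℕ) ≤ (b : ℕ) → lam a ≤ lam b := by
  have h' : ∀ (m : ℕ) (hm1 : m < n) (hm : m + 1 < n),
      lam ⟨m, hm1⟩ ≤ lam ⟨m + 1, hm⟩ := fun m hm1 hm => h ⟨m, hm1⟩ hm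
  have H : ∀ (d m : ℕ) (hm : m < n) (h2 : m + d < n),
      lam ⟨m, hm⟩ ≤ lam ⟨m + d, h2⟩ := by
    intro d
    induction d with
    | zero => intro m hm h2; exact le_refl _
    | succ d ih =>
      intro m hm h2
      have h3 : m + d < n := by omega
      calc lam ⟨m, hm⟩ ≤ lam ⟨m + d, h3⟩ := ih m hm h3
        _ ≤ lam ⟨m + d + 1, by omega⟩ := h' (m + d) h3 (by omega)
  intro a b hab
  have hH := H ((b : ℕ) - (a : ℕ)) (a : ℕ) a.isLt (by omega)
  have e : (⟨(a : ℕ) + ((b : ℕ) - (a : ℕ)), by omega⟩ : Fin n) = b :=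
    Fin.ext (show (a : ℕ) + ((b : ℕ) - (a : ℕ)) = (b : ℕ) by omega)
  rw [e] at hH
  exact hH

lemma Sm_le_Msr (lam : Fin n → ℤ) : Sm lam ≤ Msr lam := by
  have h1 : Sm lam ≤ Sm lam * (2 * (n * n) + 2) :=
    Nat.le_mul_of_pos_right _ (by omega)
  unfold Msr
  omega

lemma chainkey (hn : 2 ≤ n) : ∀ (N : ℕ) (lam : Fin n → ℤ),
    Msr lam ≤ N → ChainP lam := by
  intro N
  induction N with
  | zero =>
    intro lam hl
    have hS : Sm lam = 0 := by have := Sm_le_Msr lam; omega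
    have hz : lam = fun _ => 0 := by
      funext i
      have hi := (Finset.sum_eq_zero_iff.mp hS) i (Finset.mem_univ i)
      omega
    rw [hz]; exact ChainP_zero
  | succ N ih =>
    intro lam hl
    by_cases h0 : lam = fun _ => 0
    · rw [h0]; exact ChainP_zero
    by_cases hswap : ∃ (k : Fin n) (hk : (k : ℕ) + 1 < n),
        lam ⟨(k : ℕ) + 1, hk⟩ < lam k
    · obtain ⟨k, hk, hlt⟩ := hswap
      have hμ : dotAct ((k : ℕ) + 1) lam
          = lam ∘ Equiv.swap k ⟨(k : ℕ) + 1, hk⟩ := dotAct_mid k hk lam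
      have hM : Msr (dotAct ((k : ℕ) + 1) lam) < Msr lam := by
        rw [hμ]
        unfold Msr
        rw [Sm_comp_swap, Pc_comp_swap]
        have := Iv_swap k hk lam hlt
        omega
      exact ChainP_extend (by omega : (k : ℕ) + 1 ≤ n)
        (by rw [pairing_mid k hk]; omega)
        (dotAct_mid_invol k hk lam)
        (ih _ (by omega))
    · push_neg at hswap
      have hmono := mono_of_adj lam hswap
      have hn0 : n ≠ 0 := by omega
      have h1n : n - 1 < n := by omega
      by_cases hlast : 0 < lam ⟨n - 1, h1n⟩
      · -- apply s_n
        obtain ⟨hS, hP⟩ := stats_top hn0 h1n lam hlast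
        have hM : Msr (dotAct n lam) < Msr lam := by
          unfold Msr
          rw [hS]
          have h1 := Iv_le (dotAct n lam)
          have e : Pc lam * (n * n + 1)
              = Pc (dotAct n lam) * (n * n + 1) + (n * n + 1) := by
            rw [← hP, add_mul, one_mul]
          linarith
        exact ChainP_extend (le_refl n)
          (by rw [pairing_top hn0 h1n]; omega)
          (dotAct_top_invol hn0 lam)
          (ih _ (by omega))
      · -- first entry is negative; apply s_0
        have hpos : 0 < n := by omega
        have hex : ∃ i, lam i ≠ 0 := by
          by_contra hc
          push_neg at hc
          exact h0 (funext fun i => hc i)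
        obtain ⟨i, hi⟩ := hex
        have hi2 : lam i ≤ lam ⟨n - 1, h1n⟩ :=
          hmono i ⟨n - 1, h1n⟩ (by simp; omega)
        have h00 : lam ⟨0, hpos⟩ < 0 := by
          have h01 : lam ⟨0, hpos⟩ ≤ lam i := hmono ⟨0, hpos⟩ i (by simp)
          omega
        obtain ⟨hS, hP⟩ := stats_zero hpos lam h00
        have hM : Msr (dotAct 0 lam) < Msr lam := by
          unfold Msr
          have e1 : Sm lam * (2 * (n * n) + 2)
              = Sm (dotAct 0 lam) * (2 * (n * n) + 2) + (2 * (n * n) + 2) := by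
            rw [← hS, add_mul, one_mul]
          have e2 : Pc (dotAct 0 lam) * (n * n + 1)
              ≤ (Pc lam + 1) * (n * n + 1) := Nat.mul_le_mul_right _ hP
          have e3 : (Pc lam + 1) * (n * n + 1)
              = Pc lam * (n * n + 1) + (n * n + 1) := by ring
          have h1 := Iv_le (dotAct 0 lam)
          linarith
        exact ChainP_extend (by omega : 0 ≤ n)
          (by rw [pairing_zero hpos]; omega)
          (dotAct_zero_invol lam)
          (ih _ (by omega))


/-- every λ ∈ ℤ^n is reached from (0,…,0) by a chain of dot-simple
reflections with ⟨λ^{(m)}, α_{j_m}⟩ > 0 at each step. -/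
theorem stmt17 (n : ℕ) (hn : 2 ≤ n) (lam : Fin n → ℤ) :
    ∃ (L : ℕ) (js : ℕ → ℕ) (seq : ℕ → (Fin n → ℤ)),
      (∀ ℓ, ℓ < L → js ℓ ≤ n) ∧
      seq 0 = (fun _ => 0) ∧
      (∀ ℓ, ℓ < L → seq (ℓ + 1) = dotAct (js ℓ) (seq ℓ)) ∧
      seq L = lam ∧
      (∀ ℓ, ℓ < L → 0 < pairing (js ℓ) (seq (ℓ + 1))) := by
  have h := chainkey hn (Msr lam) lam le_rfl
  unfold ChainP at h
  exact h

end CCnDAHA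
end

section
/- Fix integers n ≥ 2, 1 ≤ i₀ ≤ n, r−1 ≥ 1, and a sign ε ∈ {+1, −1}. Let s be an irreducible factor in A of T^{2(n−i₀)}·Q^{2(r−1)}·T_n + 1 if ε = +1, and of T^{2(n−i₀)}·Q^{2(r−1)}·T_0 + 1 if ε = −1, and form K_s. Set q̄ = (Q²)‾, t̄ = (T²)‾, ā* = (T_n T_0)‾ ∈ K_s^×. Then the map ℤ^n → (K_s^×)^n sending λ to (q̄^{λ_1} t̄^{ρ(λ)_1} (ā*)^{σ(λ)_1}, …, q̄^{λ_n} t̄^{ρ(λ)_n} (ā*)^{σ(λ)_n}) is injective. -/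
open scoped Classical

namespace CCnDAHA

variable {n : ℕ}




/-- Laurent polynomial ring in N variables over K. -/
abbrev LaurentMv (K : Type*) [CommRing K] (N : ℕ) : Type _ := AddMonoidAlgebra K (Fin N →₀ ℤ)

/-- evaluation of a Laurent polynomial at a point z. -/
noncomputable def evalAt {K : Type*} [Field K] (z : Fin n → K) (f : LaurentMv K n) : K :=
  Finsupp.sum f.coeff (fun v c => c * ∏ i, z i ^ (v i))

/-- cyclic successor in Fin k1. -/
def finSucc {k1 : ℕ} (m : Fin k1) : Fin k1 :=
  ⟨((m : ℕ) + 1) % k1, Nat.mod_lt _ (by have := m.isLt; omega)⟩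

/-- A wheel of type (k1, r1) in z, with parameters t, q. -/
def IsWheel {K : Type*} [Field K] (k1 r1 : ℕ) (t q : K) (z : Fin n → Kˣ)
    (idx : Fin k1 → Fin n) (sg : Fin k1 → ℤ) (p : Fin k1 → ℕ) : Prop :=
  Function.Injective idx ∧
  (∀ m, sg m = 1 ∨ sg m = -1) ∧
  (∑ m, p m) = r1 ∧
  (∀ m : Fin k1, ((z (idx m) : K) ^ (sg m)) * t * q ^ (p m)
      = (z (idx (finSucc m)) : K) ^ (sg (finSucc m))) ∧
  (∀ m : Fin k1, p m = 0 →
    (sg m = 1 ∧ sg (finSucc m) = 1 ∧ idx m < idx (finSucc m)) ∨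
    (sg m = 1 ∧ sg (finSucc m) = -1) ∨
    (sg m = -1 ∧ sg (finSucc m) = -1 ∧ idx (finSucc m) < idx m))

/-- z admits mw wheels of type (k1,r1) with pairwise disjoint index sets. -/
def HasWheels {K : Type*} [Field K] (k1 r1 : ℕ) (t q : K) (mw : ℕ) (z : Fin n → Kˣ) : Prop :=
  ∃ (idx : Fin mw → Fin k1 → Fin n) (sg : Fin mw → Fin k1 → ℤ) (p : Fin mw → Fin k1 → ℕ),
    (∀ a, IsWheel k1 r1 t q z (idx a) (sg a) (p a)) ∧
    (∀ a b, a ≠ b → ∀ m m', idx a m ≠ idx b m')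

/-- the mw-wheel condition of type (k1, r1). -/
def SatisfiesWheel {K : Type*} [Field K] (k1 r1 : ℕ) (t q : K) (mw : ℕ)
    (f : LaurentMv K n) : Prop :=
  ∀ z : Fin n → Kˣ, HasWheels k1 r1 t q mw z → evalAt (fun i => (z i : K)) f = 0

/-- The six-variable Laurent polynomial ring A (variables Q,T,T_n,T_0,U_n,U_0 = 0,…,5). -/
abbrev A6 : Type := AddMonoidAlgebra ℂ (Fin 6 →₀ ℤ)

/-- image of x ∈ A in the fraction field K_s of A/(s). -/
noncomputable def bar (s : A6) (x : A6) : FractionRing (A6 ⧸ Ideal.span {s}) :=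
  algebraMap (A6 ⧸ Ideal.span {s}) (FractionRing (A6 ⧸ Ideal.span {s}))
    (Ideal.Quotient.mk (Ideal.span {s}) x)

/-- the permutation action s_i f (1 ≤ i ≤ n−1), swapping the variables x_i, x_j. -/
noncomputable def sSwap {K : Type*} [CommRing K] (i j : Fin n) (f : LaurentMv K n) :
    LaurentMv K n :=
  Finsupp.sum f.coeff (fun v c =>
    AddMonoidAlgebra.single (Finsupp.equivMapDomain (Equiv.swap i j) v) c)

/-- the action s_n f : x_i ↦ x_i⁻¹. -/
noncomputable def sNeg {K : Type*} [CommRing K] (i : Fin n) (f : LaurentMv K n) :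
    LaurentMv K n :=
  Finsupp.sum f.coeff (fun v c => AddMonoidAlgebra.single (Finsupp.update v i (-(v i))) c)

/-- the action s_0 f : x_i ↦ q·x_i⁻¹. -/
noncomputable def sNegQ {K : Type*} [Field K] (q : K) (i : Fin n) (f : LaurentMv K n) :
    LaurentMv K n :=
  Finsupp.sum f.coeff (fun v c =>
    AddMonoidAlgebra.single (Finsupp.update v i (-(v i))) (c * q ^ (v i)))

/-- defining relation of the Noumi operator T̂_i (1 ≤ i ≤ n−1), for the adjacent pair (i,j):
(1 − x_i x_j^{−1})(g − t^{1/2} f) = t^{−1/2}(1 − t x_i x_j^{−1})(s_i f − f). -/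
def RelMid {K : Type*} [Field K] (th : K) (i j : Fin n) (f g : LaurentMv K n) : Prop :=
  (AddMonoidAlgebra.single 0 1
      - AddMonoidAlgebra.single (Finsupp.single i 1 + Finsupp.single j (-1)) (1 : K))
      * (g - th • f)
    = th⁻¹ • ((AddMonoidAlgebra.single 0 1
      - AddMonoidAlgebra.single (Finsupp.single i 1 + Finsupp.single j (-1)) (th ^ 2))
      * (sSwap i j f - f))

/-- defining relation of T̂_n (i is the last variable):
(1 − x_i²)(g − t_n^{1/2} f) = t_n^{−1/2}(1 − a x_i)(1 − b x_i)(s_n f − f). -/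
def RelLast {K : Type*} [Field K] (tnh a b : K) (i : Fin n) (f g : LaurentMv K n) : Prop :=
  (AddMonoidAlgebra.single 0 1 - AddMonoidAlgebra.single (Finsupp.single i 2) (1 : K))
      * (g - tnh • f)
    = tnh⁻¹ • (((AddMonoidAlgebra.single 0 1 - AddMonoidAlgebra.single (Finsupp.single i 1) a)
        * (AddMonoidAlgebra.single 0 1 - AddMonoidAlgebra.single (Finsupp.single i 1) b))
      * (sNeg i f - f))

/-- defining relation of T̂_0 (i is the first variable):
(1 − q x_i^{−2})(g − t_0^{1/2} f) = t_0^{−1/2}(1 − c x_i^{−1})(1 − d x_i^{−1})(s_0 f − f). -/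
def RelZero {K : Type*} [Field K] (t0h q c d : K) (i : Fin n) (f g : LaurentMv K n) : Prop :=
  (AddMonoidAlgebra.single 0 1 - AddMonoidAlgebra.single (Finsupp.single i (-2)) q)
      * (g - t0h • f)
    = t0h⁻¹ • (((AddMonoidAlgebra.single 0 1 - AddMonoidAlgebra.single (Finsupp.single i (-1)) c)
        * (AddMonoidAlgebra.single 0 1 - AddMonoidAlgebra.single (Finsupp.single i (-1)) d))
      * (sNegQ q i f - f))



set_option synthInstance.maxHeartbeats 1000000
set_option maxHeartbeats 1000000

namespace StmtAux

abbrev G6 := Fin 6 →₀ ℤ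

noncomputable def X (u : G6) : A6 := AddMonoidAlgebra.single u 1

lemma X_mul (u v : G6) : X u * X v = X (u + v) := by
  simp [X, AddMonoidAlgebra.single_mul_single]

lemma X_zero : X 0 = 1 := (AddMonoidAlgebra.one_def).symm

/-- the group of monomial units -/
noncomputable def M : Multiplicative G6 →* A6ˣ where
  toFun u := ⟨X u.toAdd, X (-u.toAdd),
    by rw [X_mul, add_neg_cancel, X_zero], by rw [X_mul, neg_add_cancel, X_zero]⟩
  map_one' := Units.ext X_zero
  map_mul' x y := Units.ext (X_mul _ _).symm

lemma M_val (u : G6) : ((M (Multiplicative.ofAdd u)) : A6) = X u := rfl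

section Phi

variable (c : Fin 6) (w : G6)

/-- the binomial X^w + 1 -/
noncomputable def pB : A6 := X w + 1

/-- character part of the substitution hom -/
noncomputable def Fchar : Multiplicative G6 →* A6 where
  toFun u := AddMonoidAlgebra.single (u.toAdd - (u.toAdd c) • w)
      ((((-1 : ℂˣ) ^ (u.toAdd c)) : ℂ))
  map_one' := by
    simp [AddMonoidAlgebra.one_def]
  map_mul' x y := by
    simp only [toAdd_mul, Finsupp.add_apply, AddMonoidAlgebra.single_mul_single]
    rw [zpow_add₀ (Units.ne_zero _)]
    congr 1
    rw [add_smul]; abel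

noncomputable def Phi : A6 →ₐ[ℂ] A6 := AddMonoidAlgebra.lift ℂ A6 G6 (Fchar c w)

lemma Phi_single (u : G6) (z : ℂ) :
    Phi c w (AddMonoidAlgebra.single u z)
      = AddMonoidAlgebra.single (u - (u c) • w) (z * (((-1 : ℂˣ) ^ (u c)) : ℂ)) := by
  rw [Phi, AddMonoidAlgebra.lift_single]
  show z • AddMonoidAlgebra.single _ _ = _
  rw [AddMonoidAlgebra.smul_single']
  rfl

end Phi

lemma neg_one_zpow_odd {G : Type*} [Group G] [HasDistribNeg G] {k : ℤ} (hk : Odd k) :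
    (-1 : G) ^ k = -1 := by
  obtain ⟨m, rfl⟩ := hk
  rw [zpow_add, zpow_one, zpow_mul]
  have h2 : ((-1 : G) ^ (2 : ℤ)) = 1 := by
    rw [show (2:ℤ) = ((2:ℕ):ℤ) from rfl, zpow_natCast]
    norm_num
  rw [h2, one_zpow, one_mul]

section Quot

variable (c : Fin 6) (w : G6)

local notation "π" => Ideal.Quotient.mk (Ideal.span {pB w})

lemma pi_pB : π (pB w) = 0 :=
  Ideal.Quotient.eq_zero_iff_mem.2 (Ideal.subset_span rfl)

lemma pi_Xw : π (X w) = -1 := by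
  have h := pi_pB w
  rw [pB, map_add, map_one] at h
  exact eq_neg_of_add_eq_zero_left h

noncomputable def mpi : Multiplicative G6 →* (A6 ⧸ Ideal.span {pB w})ˣ :=
  (Units.map (Ideal.Quotient.mk (Ideal.span {pB w})).toMonoidHom).comp M

lemma mpi_val (u : G6) : ((mpi w (Multiplicative.ofAdd u)) : A6 ⧸ Ideal.span {pB w}) = π (X u) := rfl

lemma mpi_w : mpi w (Multiplicative.ofAdd w) = -1 :=
  Units.ext (by rw [mpi_val, pi_Xw]; simp)

lemma pi_X_zsmul (k : ℤ) :
    π (X (k • w)) = (((-1 : (A6 ⧸ Ideal.span {pB w})ˣ) ^ k : (A6 ⧸ Ideal.span {pB w})ˣ) : A6 ⧸ Ideal.span {pB w}) := by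
  rw [← mpi_val, ofAdd_zsmul, map_zpow, mpi_w]

lemma pi_const (k : ℤ) :
    π (AddMonoidAlgebra.single (0 : G6) ((((-1 : ℂˣ) : ℂ)) ^ k))
      = (((-1 : (A6 ⧸ Ideal.span {pB w})ˣ) ^ k : (A6 ⧸ Ideal.span {pB w})ˣ) : A6 ⧸ Ideal.span {pB w}) := by
  simp only [Units.val_neg, Units.val_one]
  rcases Int.even_or_odd k with hk | hk
  · have h2 : ((-1 : (A6 ⧸ Ideal.span {pB w})ˣ) ^ k) = 1 :=
      hk.neg_one_zpow (α := (A6 ⧸ Ideal.span {pB w})ˣ)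
    rw [hk.neg_one_zpow, h2, Units.val_one]
    rw [← AddMonoidAlgebra.one_def, map_one]
  · have h2 : ((-1 : (A6 ⧸ Ideal.span {pB w})ˣ) ^ k) = -1 :=
      neg_one_zpow_odd (G := (A6 ⧸ Ideal.span {pB w})ˣ) hk
    rw [hk.neg_one_zpow, h2, Units.val_neg, Units.val_one]
    have h1 : AddMonoidAlgebra.single (0 : G6) (-1 : ℂ) = -1 := by
      rw [AddMonoidAlgebra.one_def, ← AddMonoidAlgebra.single_neg]
    rw [h1, map_neg, map_one]

lemma single_zero_neg_one : AddMonoidAlgebra.single (0 : G6) (-1 : ℂ) = -1 := by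
  rw [AddMonoidAlgebra.one_def, ← AddMonoidAlgebra.single_neg]

lemma pi_Phi (f : A6) : π (Phi c w f) = π f := by
  induction f using AddMonoidAlgebra.induction_linear with
  | zero => rw [map_zero, map_zero]
  | add f g hf hg => rw [map_add, map_add, map_add, hf, hg]
  | single u z =>
    show π (Phi c w (AddMonoidAlgebra.single u z)) = π (AddMonoidAlgebra.single u z)
    rw [Phi_single]
    have hmw : (u - (u c) • w) + (u c) • w = u := sub_add_cancel u ((u c) • w)
    have e1 : AddMonoidAlgebra.single u z
        = AddMonoidAlgebra.single (0:G6) z * X (u - (u c) • w) * X ((u c) • w) := by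
      rw [mul_assoc, X_mul, hmw, X, AddMonoidAlgebra.single_mul_single, zero_add, mul_one]
    have e2 : AddMonoidAlgebra.single (u - (u c) • w) (z * (((-1 : ℂˣ) ^ (u c)) : ℂ))
        = AddMonoidAlgebra.single (0:G6) z * X (u - (u c) • w)
          * AddMonoidAlgebra.single (0:G6) ((((-1 : ℂˣ) : ℂ)) ^ (u c)) := by
      rw [X, AddMonoidAlgebra.single_mul_single, AddMonoidAlgebra.single_mul_single,
        zero_add, add_zero, mul_one]
    rw [e1, e2, map_mul, map_mul, map_mul, map_mul, pi_const, pi_X_zsmul]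

lemma Phi_pB (hw : w c = 1) : Phi c w (pB w) = 0 := by
  rw [pB, map_add, map_one, X, Phi_single, hw, one_smul, sub_self, one_mul, zpow_one,
    Units.val_neg, Units.val_one, single_zero_neg_one, neg_add_cancel]

lemma dvd_iff (hw : w c = 1) (f : A6) : pB w ∣ f ↔ Phi c w f = 0 := by
  constructor
  · rintro ⟨g, rfl⟩
    rw [map_mul, Phi_pB c w hw, zero_mul]
  · intro h
    have h2 : π f = 0 := by rw [← pi_Phi c w f, h, map_zero]
    exact Ideal.mem_span_singleton.1 (Ideal.Quotient.eq_zero_iff_mem.1 h2)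

lemma prime_pB (hw : w c = 1) : Prime (pB w) := by
  refine ⟨?_, ?_, ?_⟩
  · intro h0
    have h2 : AddMonoidAlgebra.single w (1:ℂ) = AddMonoidAlgebra.single (0:G6) (-1 : ℂ) := by
      rw [single_zero_neg_one]
      exact eq_neg_of_add_eq_zero_left h0
    rcases AddMonoidAlgebra.single_inj.1 h2 with ⟨_, h3⟩ | ⟨h3, _⟩ <;> norm_num at h3
  · intro hu
    have h1 := (dvd_iff c w hw 1).1 hu.dvd
    rw [map_one] at h1
    exact one_ne_zero h1
  · intro a b hab
    have h1 := (dvd_iff c w hw _).1 hab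
    rw [map_mul] at h1
    rcases mul_eq_zero.1 h1 with h | h
    · exact Or.inl ((dvd_iff c w hw a).2 h)
    · exact Or.inr ((dvd_iff c w hw b).2 h)

lemma extract (hw : w c = 1) (v : G6) (hdv : pB w ∣ (X v - 1)) : v = (v c) • w := by
  have h1 := (dvd_iff c w hw _).1 hdv
  rw [map_sub, map_one, X, Phi_single, one_mul] at h1
  have h2 : AddMonoidAlgebra.single (v - (v c) • w) ((((-1 : ℂˣ) ^ (v c)) : ℂ))
      = AddMonoidAlgebra.single (0:G6) (1:ℂ) := by
    rw [← AddMonoidAlgebra.one_def]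
    exact sub_eq_zero.1 h1
  rcases AddMonoidAlgebra.single_inj.1 h2 with ⟨h3, _⟩ | ⟨h3, _⟩
  · exact (sub_eq_zero.1 h3)
  · exact absurd h3 (zpow_ne_zero _ (Units.ne_zero _))

end Quot

end StmtAux


section Main

variable {A B : ℤ}

set_option synthInstance.maxHeartbeats 1000000 in
set_option maxHeartbeats 1000000 in
lemma stmt18_aux (n : ℕ) (A B : ℤ) (c c' : Fin 6)
    (hcc : (c = 2 ∧ c' = 3) ∨ (c = 3 ∧ c' = 2))
    (s : A6) (hirr : Irreducible s)
    (hdvd : s ∣ (AddMonoidAlgebra.single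
        (Finsupp.single (1 : Fin 6) A + Finsupp.single (0 : Fin 6) B
          + Finsupp.single c 1) (1 : ℂ)
      + AddMonoidAlgebra.single 0 1))
    [inst : IsDomain (A6 ⧸ Ideal.span {s})] :
    Function.Injective (fun lam : Fin n → ℤ => fun i : Fin n =>
      bar s (AddMonoidAlgebra.single (Finsupp.single (0 : Fin 6) 2) 1) ^ (lam i)
        * bar s (AddMonoidAlgebra.single (Finsupp.single (1 : Fin 6) 2) 1) ^ (rho lam i)
        * bar s (AddMonoidAlgebra.single
            (Finsupp.single (2 : Fin 6) 1 + Finsupp.single (3 : Fin 6) 1) 1)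
            ^ (sgn lam i)) := by
  classical
  set w : StmtAux.G6 := Finsupp.single (1 : Fin 6) A + Finsupp.single (0 : Fin 6) B
      + Finsupp.single c 1 with hwdef
  have hwc : w c = 1 := by
    rcases hcc with ⟨h1, h2⟩ | ⟨h1, h2⟩ <;> subst h1 <;>
      simp [hwdef, Finsupp.add_apply, Finsupp.single_apply]
  have hwc' : w c' = 0 := by
    rcases hcc with ⟨h1, h2⟩ | ⟨h1, h2⟩ <;> subst h1 <;> subst h2 <;>
      simp [hwdef, Finsupp.add_apply, Finsupp.single_apply]
  have hpprime : Prime (StmtAux.pB w) := StmtAux.prime_pB c w hwc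
  have hsp : s ∣ StmtAux.pB w := by
    have he : StmtAux.pB w = AddMonoidAlgebra.single w 1 + AddMonoidAlgebra.single 0 1 := by
      rw [StmtAux.pB, StmtAux.X, AddMonoidAlgebra.one_def]
    rw [he]
    exact hdvd
  have hps : StmtAux.pB w ∣ s := by
    obtain ⟨t, ht⟩ := hsp
    rcases hpprime.2.2 s t (ht ▸ dvd_refl _) with h | h
    · exact h
    · exfalso
      obtain ⟨u, hu⟩ := h
      apply hirr.not_isUnit
      have h1 : StmtAux.pB w * 1 = StmtAux.pB w * (u * s) := by
        calc StmtAux.pB w * 1 = s * t := by rw [mul_one]; exact ht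
        _ = s * (StmtAux.pB w * u) := by rw [← hu]
        _ = StmtAux.pB w * (u * s) := by ring
      have h2 : (1 : A6) = u * s := mul_left_cancel₀ hpprime.1 h1
      exact IsUnit.of_mul_eq_one (a := s) u (by rw [mul_comm]; exact h2.symm)
  intro lam mu h
  funext i
  have hi := congrFun h i
  dsimp only at hi
  set K := FractionRing (A6 ⧸ Ideal.span {s}) with hK
  let ψ : A6 →+* K := (algebraMap (A6 ⧸ Ideal.span {s}) K).comp
    (Ideal.Quotient.mk (Ideal.span {s}))
  let Ψ : Multiplicative StmtAux.G6 →* Kˣ := (Units.map ψ.toMonoidHom).comp StmtAux.M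
  have key : ∀ u : StmtAux.G6,
      bar s (AddMonoidAlgebra.single u 1) = ((Ψ (Multiplicative.ofAdd u)) : K) := fun u => rfl
  have step : ∀ (u : StmtAux.G6) (k : ℤ),
      bar s (AddMonoidAlgebra.single u 1) ^ k = ((Ψ (Multiplicative.ofAdd (k • u))) : K) := by
    intro u k
    rw [key, ← Units.val_zpow_eq_zpow_val, ← map_zpow, ← ofAdd_zsmul]
  rw [step _ (lam i), step _ (rho lam i), step _ (sgn lam i), step _ (mu i),
    step _ (rho mu i), step _ (sgn mu i), ← Units.val_mul, ← Units.val_mul,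
    ← Units.val_mul, ← Units.val_mul] at hi
  have hcomb : ∀ (a b2 c2 : StmtAux.G6), Ψ (Multiplicative.ofAdd (a + b2 + c2))
      = Ψ (Multiplicative.ofAdd a) * Ψ (Multiplicative.ofAdd b2)
        * Ψ (Multiplicative.ofAdd c2) := by
    intro a b2 c2
    rw [ofAdd_add, ofAdd_add, map_mul, map_mul]
  have hU : Ψ (Multiplicative.ofAdd (lam i • (Finsupp.single (0 : Fin 6) (2:ℤ))
        + rho lam i • (Finsupp.single (1 : Fin 6) (2:ℤ))
        + sgn lam i • (Finsupp.single (2 : Fin 6) (1:ℤ) + Finsupp.single (3 : Fin 6) 1)))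
      = Ψ (Multiplicative.ofAdd (mu i • (Finsupp.single (0 : Fin 6) (2:ℤ))
        + rho mu i • (Finsupp.single (1 : Fin 6) (2:ℤ))
        + sgn mu i • (Finsupp.single (2 : Fin 6) (1:ℤ) + Finsupp.single (3 : Fin 6) 1))) := by
    rw [hcomb, hcomb]
    exact Units.ext hi
  set V : StmtAux.G6 := (lam i - mu i) • (Finsupp.single (0 : Fin 6) (2:ℤ))
      + (rho lam i - rho mu i) • (Finsupp.single (1 : Fin 6) (2:ℤ))
      + (sgn lam i - sgn mu i) • (Finsupp.single (2 : Fin 6) (1:ℤ)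
          + Finsupp.single (3 : Fin 6) 1) with hVdef
  have hone : Ψ (Multiplicative.ofAdd V) = 1 := by
    have hVsub : V = (lam i • (Finsupp.single (0 : Fin 6) (2:ℤ))
        + rho lam i • (Finsupp.single (1 : Fin 6) (2:ℤ))
        + sgn lam i • (Finsupp.single (2 : Fin 6) (1:ℤ) + Finsupp.single (3 : Fin 6) 1))
        - (mu i • (Finsupp.single (0 : Fin 6) (2:ℤ))
        + rho mu i • (Finsupp.single (1 : Fin 6) (2:ℤ))
        + sgn mu i • (Finsupp.single (2 : Fin 6) (1:ℤ) + Finsupp.single (3 : Fin 6) 1)) := by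
      rw [hVdef, sub_smul, sub_smul, sub_smul]
      abel
    rw [hVsub, ofAdd_sub, map_div, hU, div_self']
  have hval : bar s (AddMonoidAlgebra.single V 1) = 1 := by
    rw [key, hone, Units.val_one]
  have hmk : Ideal.Quotient.mk (Ideal.span {s}) (AddMonoidAlgebra.single V 1 - 1) = 0 := by
    apply IsFractionRing.injective (A6 ⧸ Ideal.span {s}) K
    rw [map_zero, map_sub, map_sub, map_one, map_one]
    have : (algebraMap (A6 ⧸ Ideal.span {s}) K)
        ((Ideal.Quotient.mk (Ideal.span {s})) (AddMonoidAlgebra.single V 1)) = 1 := hval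
    rw [this, sub_self]
  have hsdvd : s ∣ StmtAux.X V - 1 :=
    Ideal.mem_span_singleton.1 (Ideal.Quotient.eq_zero_iff_mem.1 hmk)
  have hVw := StmtAux.extract c w hwc V (dvd_trans hps hsdvd)
  -- coordinates of V
  have hVc : V c = sgn lam i - sgn mu i := by
    rcases hcc with ⟨h1, h2⟩ | ⟨h1, h2⟩ <;> subst h1 <;>
      simp [hVdef, Finsupp.add_apply, Finsupp.smul_apply, Finsupp.single_apply]
  have hVc' : V c' = sgn lam i - sgn mu i := by
    rcases hcc with ⟨h1, h2⟩ | ⟨h1, h2⟩ <;> subst h2 <;>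
      simp [hVdef, Finsupp.add_apply, Finsupp.smul_apply, Finsupp.single_apply]
  have hs0 : sgn lam i - sgn mu i = 0 := by
    have h1 := congrArg (fun f : StmtAux.G6 => f c') hVw
    simp only [Finsupp.smul_apply, smul_eq_mul] at h1
    rw [hVc', hwc', mul_zero] at h1
    exact h1
  have hV0 : V = 0 := by
    rw [hVw, hVc, hs0, zero_smul]
  have h2a : V 0 = 2 * (lam i - mu i) := by
    simp [hVdef, Finsupp.add_apply, Finsupp.smul_apply, Finsupp.single_apply, hs0]
    ring
  rw [hV0] at h2a
  simp only [Finsupp.coe_zero, Pi.zero_apply] at h2a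
  omega

end Main


set_option synthInstance.maxHeartbeats 1000000 in
set_option maxHeartbeats 1000000 in
/-- under the exclusive specialization t^{n−i₀}q^{r−1}a*(b*)^{±1} = 1
(realized via an irreducible factor s of T^{2(n−i₀)}Q^{2(r−1)}T_n + 1 for ε = +1, resp. of
T^{2(n−i₀)}Q^{2(r−1)}T_0 + 1 for ε = −1, in the six-variable ring A, with K_s the fraction
field of A/(s)), the Y-eigenvalue map λ ↦ (q̄^{λ_i} t̄^{ρ(λ)_i} (ā*)^{σ(λ)_i})_i is
injective on ℤ^n, where q̄ = (Q²)‾, t̄ = (T²)‾, ā* = (T_n T_0)‾. -/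
theorem stmt18 (n : ℕ) (hn : 2 ≤ n) (i₀ r : ℕ)
    (hi₀1 : 1 ≤ i₀) (hi₀n : i₀ ≤ n) (hr : 2 ≤ r)
    (ε : ℤ) (hε : ε = 1 ∨ ε = -1)
    (s : A6) (hirr : Irreducible s)
    (hdvd : s ∣ (AddMonoidAlgebra.single
        (Finsupp.single (1 : Fin 6) ((2 * (n - i₀) : ℕ) : ℤ)
          + Finsupp.single (0 : Fin 6) ((2 * (r - 1) : ℕ) : ℤ)
          + Finsupp.single (if ε = 1 then (2 : Fin 6) else 3) 1) (1 : ℂ)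
      + AddMonoidAlgebra.single 0 1))
    [inst : IsDomain (A6 ⧸ Ideal.span {s})] :
    Function.Injective (fun lam : Fin n → ℤ => fun i : Fin n =>
      bar s (AddMonoidAlgebra.single (Finsupp.single (0 : Fin 6) 2) 1) ^ (lam i)
        * bar s (AddMonoidAlgebra.single (Finsupp.single (1 : Fin 6) 2) 1) ^ (rho lam i)
        * bar s (AddMonoidAlgebra.single
            (Finsupp.single (2 : Fin 6) 1 + Finsupp.single (3 : Fin 6) 1) 1)
            ^ (sgn lam i)) := by
  by_cases hε1 : ε = 1
  · simp only [hε1, if_pos] at hdvd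
    exact stmt18_aux n _ _ 2 3 (Or.inl ⟨rfl, rfl⟩) s hirr hdvd
  · simp only [hε1, if_neg, not_false_iff] at hdvd
    exact stmt18_aux n _ _ 3 2 (Or.inr ⟨rfl, rfl⟩) s hirr hdvd


end CCnDAHA
end
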